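/- arXiv:1105.5032 — 11 statements merged into one kernel-verified Lean document; each statement's English description precedes it below -/
import Mathlib

section
/- Let C be a finite candidate set with at least two elements and let L be a linear order on C with L-minimum candidate c_min and L-maximum candidate c_max. If a linear-order vote v on C is single-caved with respect to L, then the most preferred candidate of v is either c_min or c_max. -/
variable {α : Type*} [DecidableEq α]

/-- `l` is a linear-order vote on the finite candidate set `s`:
a duplicate-free list containing exactly the elements of `s`;
earlier in the list means more preferred (for a societal axis `L`,
earlier in the list means smaller in the order `L`). -/
def IsVoteOn (s : Finset α) (l : List α) : Prop :=
  l.Nodup ∧ ∀ a, a ∈ l ↔ a ∈ s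

/-- `a` is ranked strictly before `b` in the list `l`. -/
def Prefers (l : List α) (a b : α) : Prop :=
  l.idxOf a < l.idxOf b

instance (l : List α) (a b : α) : Decidable (Prefers l a b) :=
  inferInstanceAs (Decidable (_ < _))

/-- `v` is single-peaked with respect to the societal axis `L`. -/
def SinglePeaked (L v : List α) : Prop :=
  ∀ c1 c2 c3, c1 ∈ L → c2 ∈ L → c3 ∈ L →
    ((Prefers L c1 c2 ∧ Prefers L c2 c3) ∨ (Prefers L c3 c2 ∧ Prefers L c2 c1)) →
    Prefers v c1 c2 → Prefers v c2 c3

/-- `v` is single-caved with respect to the societal axis `L`. -/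
def SingleCaved (L v : List α) : Prop :=
  ∀ c1 c2 c3, c1 ∈ L → c2 ∈ L → c3 ∈ L →
    ((Prefers L c1 c2 ∧ Prefers L c2 c3) ∨ (Prefers L c3 c2 ∧ Prefers L c2 c1)) →
    Prefers v c2 c1 → Prefers v c3 c2

/-- The restriction of a ranking/order `l` to the subset `C` of candidates. -/
def restrictList (C : Finset α) (l : List α) : List α :=
  l.filter (fun a => decide (a ∈ C))

/-- The plurality score of candidate `c` in the election with candidate set `C`
and votes `V` (each vote a linear order on a set containing `C`): the number of
votes whose most preferred candidate among `C` is `c`. -/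
def pluralityScore (C : Finset α) (V : List (List α)) (c : α) : ℕ :=
  V.countP (fun v => decide ((restrictList C v).head? = some c))

/-- `p` is a plurality winner of the election `(C, V)`. -/
def PluralityWinner (C : Finset α) (V : List (List α)) (p : α) : Prop :=
  p ∈ C ∧ ∀ c ∈ C, pluralityScore C V c ≤ pluralityScore C V p

/-- `l'` is obtained from `l` by one swap of adjacent elements. -/
def AdjSwap (l l' : List α) : Prop :=
  ∃ (u w : List α) (x y : α), l = u ++ x :: y :: w ∧ l' = u ++ y :: x :: w

/-- `WithinSwaps k l l'` : `l` can be transformed into `l'` by a sequence of at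
most `k` adjacent swaps. -/
def WithinSwaps : ℕ → List α → List α → Prop
  | 0, l, l' => l = l'
  | (k+1), l, l' => l = l' ∨ ∃ l'', AdjSwap l l'' ∧ WithinSwaps k l'' l'

/-- `v` is swoon-SP w.r.t. axis `L` on candidate set `C`: the restriction of `v` to
`C` minus `v`'s most preferred candidate is single-peaked with respect to the
restriction of `L` to that set. -/
def SwoonSP (C : Finset α) (L v : List α) : Prop :=
  ∀ t, v.head? = some t →
    SinglePeaked (restrictList (C.erase t) L) (restrictList (C.erase t) v)

/-- The `k`-radius neighborhood of `c` with respect to `C'` and the axis `L`: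
if `C'`, listed in `L`-increasing order, is `d_1, ..., d_r` and `c = d_i`, this
is `{d_j : |i - j| ≤ k}`. -/
def nbhd (k : ℕ) (L : List α) (C' : Finset α) (c : α) : Finset α :=
  ((restrictList C' L).drop ((restrictList C' L).idxOf c - k)).take
    ((restrictList C' L).idxOf c + k + 1 - ((restrictList C' L).idxOf c - k))
    |>.toFinset

/-- The plurality election `(C, V)` is `k`-local with respect to axis `L`. -/
def KLocal (k : ℕ) (L : List α) (C : Finset α) (V : List (List α)) : Prop :=
  ∀ C' ⊆ C, ∀ c ∈ C', pluralityScore (nbhd k L C' c) V c = pluralityScore C' V c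

/-- In a `(a1, a2, 0)` scoring election over three candidates, the number of points
candidate `c` receives from (unit-weight) vote `v`. -/
def score3 (a1 a2 : ℕ) (v : List α) (c : α) : ℕ :=
  if v.idxOf c = 0 then a1 else if v.idxOf c = 1 then a2 else 0

/-- Indicator that the vote `v` does not veto (rank last) candidate `c`. -/
def vetoInd (v : List α) (c : α) : ℕ :=
  if v.getLast? = some c then 0 else 1

/-- The approval score of `c` given approval ballots `W`. -/
def approvalScore {I : Type*} [Fintype I] (W : I → Finset α) (c : α) : ℕ :=
  (Finset.univ.filter fun i => c ∈ W i).card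

/-- `p` is an approval winner of the election with candidate set `C` and ballots `W`. -/
def ApprovalWinner (C : Finset α) {I : Type*} [Fintype I] (W : I → Finset α) (p : α) : Prop :=
  p ∈ C ∧ ∀ c ∈ C, approvalScore W c ≤ approvalScore W p

/-- In a single-caved vote, the most preferred candidate is one of the
two endpoints (the `L`-minimum or the `L`-maximum) of the societal axis. -/
theorem singleCaved_top_is_endpoint
    (C : Finset α) (hC : 2 ≤ C.card) (L v : List α)
    (hL : IsVoteOn C L) (hv : IsVoteOn C v) (hsc : SingleCaved L v) :
    v.head? = L.head? ∨ v.head? = L.getLast? := by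
  classical
  obtain ⟨c0, hc0⟩ := Finset.card_pos.mp (by omega : 0 < C.card)
  have hLne : L ≠ [] := by
    intro h; subst h; exact absurd ((hL.2 c0).mpr hc0) List.not_mem_nil
  have hvne : v ≠ [] := by
    intro h; subst h; exact absurd ((hv.2 c0).mpr hc0) List.not_mem_nil
  by_contra hcon
  push_neg at hcon
  obtain ⟨h1, h2⟩ := hcon
  set t := v.head hvne with ht
  have hvh : v.head? = some t := List.head?_eq_head hvne
  have htv : t ∈ v := List.head_mem hvne
  have htL : t ∈ L := (hL.2 t).mpr ((hv.2 t).mp htv)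
  set a := L.head hLne with ha
  set b := L.getLast hLne with hb
  have hLh : L.head? = some a := List.head?_eq_head hLne
  have hLl : L.getLast? = some b := List.getLast?_eq_getLast hLne
  have hta : t ≠ a := fun h => h1 (by rw [hvh, hLh, h])
  have htb : t ≠ b := fun h => h2 (by rw [hvh, hLl, h])
  have haL : a ∈ L := List.head_mem hLne
  have hbL : b ∈ L := List.getLast_mem hLne
  have hlen : 0 < L.length := List.length_pos_iff.mpr hLne
  have hia : L.idxOf a = 0 := by
    obtain ⟨x, l, hx⟩ := List.exists_cons_of_ne_nil hLne
    subst hx; simp [ha]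
  have hitpos : 0 < L.idxOf t := by
    rcases Nat.eq_zero_or_pos (L.idxOf t) with h | h
    · exact absurd ((List.idxOf_inj htL).mp (by omega)) hta
    · exact h
  have hitlt : L.idxOf t < L.length := List.idxOf_lt_length_iff.mpr htL
  have hbget : L[L.length - 1]'(by omega) = b := by
    rw [hb, List.getLast_eq_getElem]
  have hib : L.idxOf b = L.length - 1 := by
    rw [← hbget]; exact hL.1.idxOf_getElem _ _
  have hitne : L.idxOf t ≠ L.length - 1 := by
    intro h; exact htb ((List.idxOf_inj htL).mp (by omega))
  have hPLat : Prefers L a t := by rw [Prefers, hia]; exact hitpos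
  have hPLtb : Prefers L t b := by rw [Prefers, hib]; omega
  have hit0 : v.idxOf t = 0 := by
    obtain ⟨x, l, hx⟩ := List.exists_cons_of_ne_nil hvne
    subst hx; simp [ht]
  have haV : a ∈ v := (hv.2 a).mpr ((hL.2 a).mp haL)
  have hPvta : Prefers v t a := by
    rw [Prefers, hit0]
    rcases Nat.eq_zero_or_pos (v.idxOf a) with h | h
    · exact absurd ((List.idxOf_inj htv).mp (by omega)) hta
    · exact h
  have := hsc a t b haL htL hbL (Or.inl ⟨hPLat, hPLtb⟩) hPvta
  rw [Prefers, hit0] at this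
  omega
end

section
/- Let C be a finite candidate set with at least two elements, let a be a candidate not in C, let L be a linear order on C ∪ {a}, and let V be a finite collection of linear-order votes on C ∪ {a}, each single-caved with respect to L. Let p ∈ C. If p is not a plurality winner of the election (C, V) (with votes restricted to C), then p is not a plurality winner of the election (C ∪ {a}, V). -/
variable {α : Type*} [DecidableEq α]

lemma restrictList_cons_mem {C : Finset α} {b : α} (hb : b ∈ C) (l : List α) :
    restrictList C (b :: l) = b :: restrictList C l := by
  simp [restrictList, List.filter_cons, hb]

lemma restrictList_cons_not_mem {C : Finset α} {b : α} (hb : b ∉ C) (l : List α) :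
    restrictList C (b :: l) = restrictList C l := by
  simp [restrictList, List.filter_cons, hb]

lemma mem_restrictList {C : Finset α} {l : List α} {x : α} :
    x ∈ restrictList C l ↔ x ∈ l ∧ x ∈ C := by
  simp [restrictList, List.mem_filter]

lemma head_restrict_min {C : Finset α} :
    ∀ {v : List α} {t : α}, (restrictList C v).head? = some t →
    t ∈ C ∧ t ∈ v ∧ ∀ x ∈ v, x ∈ C → v.idxOf t ≤ v.idxOf x := by
  intro v
  induction v with
  | nil => intro t h; simp [restrictList] at h
  | cons b l ih =>
    intro t h
    by_cases hb : b ∈ C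
    · rw [restrictList_cons_mem hb, List.head?_cons, Option.some.injEq] at h
      subst h
      exact ⟨hb, .head _, fun x hx hxC => by simp [List.idxOf_cons_self]⟩
    · rw [restrictList_cons_not_mem hb] at h
      obtain ⟨htC, htv, hmin⟩ := ih h
      have hbt : b ≠ t := fun e => hb (e ▸ htC)
      refine ⟨htC, .tail _ htv, fun x hx hxC => ?_⟩
      have hbx : b ≠ x := fun e => hb (e ▸ hxC)
      rw [List.mem_cons] at hx
      rcases hx with rfl | hx
      · exact absurd rfl hbx.symm
      · rw [List.idxOf_cons_ne _ hbt, List.idxOf_cons_ne _ hbx]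
        exact Nat.succ_le_succ (hmin x hx hxC)

lemma getLast_restrict_max {C : Finset α} :
    ∀ {v : List α} {t : α}, v.Nodup → (restrictList C v).getLast? = some t →
    t ∈ C ∧ t ∈ v ∧ ∀ x ∈ v, x ∈ C → v.idxOf x ≤ v.idxOf t := by
  intro v
  induction v with
  | nil => intro t _ h; simp [restrictList] at h
  | cons b l ih =>
    intro t hnd h
    have hndl : l.Nodup := hnd.of_cons
    have hbl : b ∉ l := (List.nodup_cons.mp hnd).1
    by_cases hb : b ∈ C
    · rw [restrictList_cons_mem hb] at h
      cases hr : (restrictList C l) with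
      | nil =>
        rw [hr] at h
        simp only [List.getLast?_singleton, Option.some.injEq] at h
        subst h
        refine ⟨hb, .head _, fun x hx hxC => ?_⟩
        rw [List.mem_cons] at hx
        rcases hx with rfl | hx
        · exact le_refl _
        · exact absurd (mem_restrictList.mpr ⟨hx, hxC⟩) (by simp [hr])
      | cons s r =>
        rw [hr, List.getLast?_cons_cons, ← hr] at h
        obtain ⟨htC, htl, hmax⟩ := ih hndl h
        have hbt : b ≠ t := fun e => hbl (e ▸ htl)
        refine ⟨htC, .tail _ htl, fun x hx hxC => ?_⟩
        rw [List.idxOf_cons_ne _ hbt]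
        rw [List.mem_cons] at hx
        rcases hx with rfl | hx
        · simp [List.idxOf_cons_self]
        · have hbx : b ≠ x := fun e => hbl (e ▸ hx)
          rw [List.idxOf_cons_ne _ hbx]
          exact Nat.succ_le_succ (hmax x hx hxC)
    · rw [restrictList_cons_not_mem hb] at h
      obtain ⟨htC, htl, hmax⟩ := ih hndl h
      have hbt : b ≠ t := fun e => hb (e ▸ htC)
      refine ⟨htC, .tail _ htl, fun x hx hxC => ?_⟩
      have hbx : b ≠ x := fun e => hb (e ▸ hxC)
      rw [List.mem_cons] at hx
      rcases hx with rfl | hx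
      · exact absurd rfl hbx.symm
      · rw [List.idxOf_cons_ne _ hbt, List.idxOf_cons_ne _ hbx]
        exact Nat.succ_le_succ (hmax x hx hxC)

lemma restrict_ne_nil {C : Finset α} {v : List α} {x : α} (hxC : x ∈ C) (hxv : x ∈ v) :
    restrictList C v ≠ [] := fun e => by
  have := mem_restrictList.mpr ⟨hxv, hxC⟩
  rw [e] at this; simp at this

lemma head_restrict_eq {C : Finset α} {v : List α} {t : α} (hnd : v.Nodup)
    (htC : t ∈ C) (htv : t ∈ v)
    (hmin : ∀ x ∈ v, x ∈ C → v.idxOf t ≤ v.idxOf x) :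
    (restrictList C v).head? = some t := by
  obtain ⟨s, r, hsr⟩ := List.exists_cons_of_ne_nil (restrict_ne_nil htC htv)
  have hs : (restrictList C v).head? = some s := by rw [hsr]; rfl
  obtain ⟨hsC, hsv, hsmin⟩ := head_restrict_min hs
  have : s = t := (List.idxOf_inj hsv).mp
    (le_antisymm (hsmin t htv htC) (hmin s hsv hsC))
  rwa [this] at hs

lemma getLast_restrict_eq {C : Finset α} {v : List α} {t : α} (hnd : v.Nodup)
    (htC : t ∈ C) (htv : t ∈ v)
    (hmax : ∀ x ∈ v, x ∈ C → v.idxOf x ≤ v.idxOf t) :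
    (restrictList C v).getLast? = some t := by
  obtain ⟨s, hs⟩ := Option.ne_none_iff_exists'.mp
    (fun e => restrict_ne_nil htC htv (List.getLast?_eq_none_iff.mp e))
  obtain ⟨hsC, hsv, hsmax⟩ := getLast_restrict_max hnd hs
  have : s = t := (List.idxOf_inj hsv).mp
    (le_antisymm (hmax s hsv hsC) (hsmax t htv htC))
  rwa [this] at hs

lemma top_extreme {C' : Finset α} {L v : List α} {m M t : α}
    (hLnd : L.Nodup) (hvnd : v.Nodup)
    (hLmem : ∀ x ∈ C', x ∈ L) (hvmem : ∀ x ∈ C', x ∈ v)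
    (hsc : SingleCaved L v)
    (hm : (restrictList C' L).head? = some m)
    (hM : (restrictList C' L).getLast? = some M)
    (ht : (restrictList C' v).head? = some t) :
    t = m ∨ t = M := by
  by_contra hcon
  push_neg at hcon
  obtain ⟨htm, htM⟩ := hcon
  obtain ⟨hmC, hmL, hmmin⟩ := head_restrict_min hm
  obtain ⟨hMC, hML, hMmax⟩ := getLast_restrict_max hLnd hM
  obtain ⟨htC, htv, htmin⟩ := head_restrict_min ht
  have htL : t ∈ L := hLmem t htC
  have h1 : Prefers L m t :=
    lt_of_le_of_ne (hmmin t htL htC) fun e => htm ((List.idxOf_inj hmL).mp e).symm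
  have h2 : Prefers L t M :=
    lt_of_le_of_ne (hMmax t htL htC) fun e => htM ((List.idxOf_inj htL).mp e)
  have h3 : Prefers v t m :=
    lt_of_le_of_ne (htmin m (hvmem m hmC) hmC)
      fun e => htm ((List.idxOf_inj htv).mp e)
  have h4 : Prefers v M t := hsc m t M hmL htL hML (Or.inl ⟨h1, h2⟩) h3
  exact absurd (htmin M (hvmem M hMC) hMC) (not_le.mpr h4)

/-- In a single-caved electorate, adding one candidate `a` cannot make a
candidate `p` that was not a plurality winner into a plurality winner. -/
theorem singleCaved_addOneCandidate_no_new_winner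
    (C : Finset α) (hC : 2 ≤ C.card) (a : α) (ha : a ∉ C)
    (L : List α) (hL : IsVoteOn (insert a C) L)
    (V : List (List α))
    (hV : ∀ v ∈ V, IsVoteOn (insert a C) v ∧ SingleCaved L v)
    (p : α) (hp : p ∈ C)
    (hlose : ¬ PluralityWinner C V p) :
    ¬ PluralityWinner (insert a C) V p := by
  intro hwin
  obtain ⟨-, hw⟩ := hwin
  obtain ⟨hLnd, hLmem⟩ := hL
  have haS : a ∈ insert a C := Finset.mem_insert_self a C
  have hmemL : ∀ x ∈ C, x ∈ L := fun x hx => (hLmem x).mpr (Finset.mem_insert_of_mem hx)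
  have hmemLS : ∀ x ∈ insert a C, x ∈ L := fun x hx => (hLmem x).mpr hx
  -- the two L-extremes of C
  obtain ⟨m, r1, hmr⟩ := List.exists_cons_of_ne_nil (restrict_ne_nil hp (hmemL p hp))
  have hm : (restrictList C L).head? = some m := by rw [hmr]; rfl
  obtain ⟨M, hM⟩ := Option.ne_none_iff_exists'.mp
    (fun e => restrict_ne_nil hp (hmemL p hp) (List.getLast?_eq_none_iff.mp e))
  -- the two L-extremes of insert a C
  obtain ⟨m', r2, hmr'⟩ := List.exists_cons_of_ne_nil (restrict_ne_nil haS (hmemLS a haS))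
  have hmS : (restrictList (insert a C) L).head? = some m' := by rw [hmr']; rfl
  obtain ⟨M', hMS⟩ := Option.ne_none_iff_exists'.mp
    (fun e => restrict_ne_nil haS (hmemLS a haS) (List.getLast?_eq_none_iff.mp e))
  obtain ⟨hmC, hmL, hmmin⟩ := head_restrict_min hm
  obtain ⟨hMC, hML, hMmax⟩ := getLast_restrict_max hLnd hM
  obtain ⟨hmS', hmSL, hmSmin⟩ := head_restrict_min hmS
  obtain ⟨hMS', hMSL, hMSmax⟩ := getLast_restrict_max hLnd hMS
  have hne_mM : m ≠ M := by
    intro e; subst e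
    have hall : ∀ x ∈ C, x = m := fun x hx =>
      (List.idxOf_inj (hmemL x hx)).mp
        (le_antisymm (hMmax x (hmemL x hx) hx) (hmmin x (hmemL x hx) hx))
    have hsub : C ⊆ {m} := fun x hx => Finset.mem_singleton.mpr (hall x hx)
    have := Finset.card_le_card hsub
    simp only [Finset.card_singleton] at this
    omega
  have hne_mMS : m' ≠ M' := by
    intro e; subst e
    have hall : ∀ x ∈ insert a C, x = m' := fun x hx =>
      (List.idxOf_inj (hmemLS x hx)).mp
        (le_antisymm (hMSmax x (hmemLS x hx) hx) (hmSmin x (hmemLS x hx) hx))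
    have h1 := hall a haS
    have h2 := hall p (Finset.mem_insert_of_mem hp)
    exact ha (h2.trans h1.symm ▸ hp)
  -- the loser witness
  obtain ⟨c, hcC, hcgt⟩ : ∃ c ∈ C, pluralityScore C V p < pluralityScore C V c := by
    by_contra hcon
    push_neg at hcon
    exact hlose ⟨hp, hcon⟩
  have hVpos : 0 < V.length :=
    lt_of_lt_of_le (Nat.lt_of_le_of_lt (Nat.zero_le _) hcgt) List.countP_le_length
  -- every vote's top over C is m or M
  have topC : ∀ v ∈ V, ∀ t, (restrictList C v).head? = some t → t = m ∨ t = M := by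
    intro v hv t ht
    obtain ⟨⟨hvnd, hvmem⟩, hsc⟩ := hV v hv
    exact top_extreme hLnd hvnd hmemL
      (fun x hx => (hvmem x).mpr (Finset.mem_insert_of_mem hx)) hsc hm hM ht
  -- every vote's top over insert a C is m' or M'
  have topS : ∀ v ∈ V, ∀ t, (restrictList (insert a C) v).head? = some t →
      t = m' ∨ t = M' := by
    intro v hv t ht
    obtain ⟨⟨hvnd, hvmem⟩, hsc⟩ := hV v hv
    exact top_extreme hLnd hvnd hmemLS (fun x hx => (hvmem x).mpr hx) hsc hmS hMS ht
  have headS_ex : ∀ v ∈ V, ∃ t r, restrictList (insert a C) v = t :: r := by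
    intro v hv
    obtain ⟨⟨hvnd, hvmem⟩, hsc⟩ := hV v hv
    exact List.exists_cons_of_ne_nil (restrict_ne_nil haS ((hvmem a).mpr haS))
  have hzeroC : ∀ x, x ≠ m → x ≠ M → pluralityScore C V x = 0 := by
    intro x hxm hxM
    refine List.countP_eq_zero.mpr fun v hv hpv => ?_
    simp only [decide_eq_true_eq] at hpv
    rcases topC v hv x hpv with h | h
    · exact hxm h
    · exact hxM h
  have hzeroS : ∀ x, x ≠ m' → x ≠ M' → pluralityScore (insert a C) V x = 0 := by
    intro x hxm hxM
    refine List.countP_eq_zero.mpr fun v hv hpv => ?_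
    simp only [decide_eq_true_eq] at hpv
    rcases topS v hv x hpv with h | h
    · exact hxm h
    · exact hxM h
  have hmono : ∀ x ∈ C, pluralityScore (insert a C) V x ≤ pluralityScore C V x := by
    intro x hx
    refine List.countP_mono_left fun v hv hpv => ?_
    simp only [decide_eq_true_eq] at hpv ⊢
    obtain ⟨⟨hvnd, hvmem⟩, hsc⟩ := hV v hv
    obtain ⟨hxS, hxv, hmin⟩ := head_restrict_min hpv
    exact head_restrict_eq hvnd hx hxv
      (fun y hy hyC => hmin y hy (Finset.mem_insert_of_mem hyC))
  have hsum_lower : V.length ≤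
      pluralityScore (insert a C) V m' + pluralityScore (insert a C) V M' := by
    have heq := List.length_eq_countP_add_countP
      (p := fun v => decide ((restrictList (insert a C) v).head? = some m')) (l := V)
    have hle : V.countP
        (fun v => decide ¬(decide ((restrictList (insert a C) v).head? = some m') = true))
        ≤ pluralityScore (insert a C) V M' := by
      refine List.countP_mono_left fun v hv hpv => ?_
      simp only [decide_eq_true_eq, decide_not, Bool.not_eq_true', decide_eq_false_iff_not]
        at hpv
      simp only [decide_eq_true_eq]
      obtain ⟨t, r, htr⟩ := headS_ex v hv
      have ht : (restrictList (insert a C) v).head? = some t := by rw [htr]; rfl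
      rcases topS v hv t ht with h | h
      · exact absurd (h ▸ ht) hpv
      · exact h ▸ ht
    calc V.length = _ + _ := heq
      _ ≤ _ := Nat.add_le_add_left hle _
  have hsum_upper : pluralityScore C V m + pluralityScore C V M ≤ V.length := by
    have heq := List.length_eq_countP_add_countP
      (p := fun v => decide ((restrictList C v).head? = some m)) (l := V)
    have hle : pluralityScore C V M ≤ V.countP
        (fun v => decide ¬(decide ((restrictList C v).head? = some m) = true)) := by
      refine List.countP_mono_left fun v hv hpv => ?_
      simp only [decide_eq_true_eq] at hpv
      simp only [decide_not, Bool.not_eq_true', decide_eq_false_iff_not, decide_eq_true_eq]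
      rw [hpv]
      exact fun e => hne_mM (Option.some.inj e).symm
    calc pluralityScore C V m + pluralityScore C V M
        ≤ pluralityScore C V m + _ := Nat.add_le_add_left hle _
      _ = V.length := heq.symm
  -- c must be one of the extremes of C
  have hcm : c = m ∨ c = M := by
    by_contra hcon
    push_neg at hcon
    rw [hzeroC c hcon.1 hcon.2] at hcgt
    omega
  have hpa : p ≠ a := fun e => ha (e ▸ hp)
  by_cases hma : m' = a
  · -- a is the L-least of insert a C
    have hMa : M' ≠ a := fun e => hne_mMS (hma.trans e.symm)
    have hMC2 : M' ∈ C := (Finset.mem_insert.mp hMS').resolve_left hMa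
    have hM'M : M' = M := by
      have h := getLast_restrict_eq hLnd hMC2 hMSL
        (fun x hx hxC => hMSmax x hx (Finset.mem_insert_of_mem hxC))
      exact Option.some.inj (h.symm.trans hM)
    rw [hma, hM'M] at topS hzeroS hsum_lower
    by_cases hpM : p = M
    · -- a takes all of m's first places and beats p = M
      have h1 : pluralityScore C V m ≤ pluralityScore (insert a C) V a := by
        refine List.countP_mono_left fun v hv hpv => ?_
        simp only [decide_eq_true_eq] at hpv ⊢
        obtain ⟨t, r, htr⟩ := headS_ex v hv
        have ht : (restrictList (insert a C) v).head? = some t := by rw [htr]; rfl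
        rcases topS v hv t ht with h | h
        · rw [h] at ht; exact ht
        · exfalso
          rw [h] at ht
          obtain ⟨⟨hvnd, hvmem⟩, hsc⟩ := hV v hv
          obtain ⟨htS, htv, hminS⟩ := head_restrict_min ht
          have hhc : (restrictList C v).head? = some M :=
            head_restrict_eq hvnd hMC htv
              (fun y hy hyC => hminS y hy (Finset.mem_insert_of_mem hyC))
          exact hne_mM (Option.some.inj (hpv.symm.trans hhc))
      have h2 : pluralityScore C V M < pluralityScore C V m := by
        rcases hcm with h | h
        · rw [h, hpM] at hcgt; exact hcgt
        · rw [h, hpM] at hcgt; exact absurd hcgt (lt_irrefl _)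
      have h3 := hmono M hMC
      have h4 := hw a haS
      rw [hpM] at h4
      omega
    · have hp0 : pluralityScore (insert a C) V p = 0 := hzeroS p hpa hpM
      have h1 := hw a haS
      have h2 := hw M (Finset.mem_insert_of_mem hMC)
      omega
  · -- m' ∈ C, so m' = m
    have hmC2 : m' ∈ C := (Finset.mem_insert.mp hmS').resolve_left hma
    have hm'm : m' = m := by
      have h := head_restrict_eq hLnd hmC2 hmSL
        (fun x hx hxC => hmSmin x hx (Finset.mem_insert_of_mem hxC))
      exact Option.some.inj (h.symm.trans hm)
    rw [hm'm] at topS hzeroS hsum_lower hne_mMS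
    by_cases hMa : M' = a
    · rw [hMa] at topS hzeroS hsum_lower
      by_cases hpm : p = m
      · have h1 : pluralityScore C V M ≤ pluralityScore (insert a C) V a := by
          refine List.countP_mono_left fun v hv hpv => ?_
          simp only [decide_eq_true_eq] at hpv ⊢
          obtain ⟨t, r, htr⟩ := headS_ex v hv
          have ht : (restrictList (insert a C) v).head? = some t := by rw [htr]; rfl
          rcases topS v hv t ht with h | h
          · exfalso
            rw [h] at ht
            obtain ⟨⟨hvnd, hvmem⟩, hsc⟩ := hV v hv
            obtain ⟨htS, htv, hminS⟩ := head_restrict_min ht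
            have hhc : (restrictList C v).head? = some m :=
              head_restrict_eq hvnd hmC htv
                (fun y hy hyC => hminS y hy (Finset.mem_insert_of_mem hyC))
            exact hne_mM (Option.some.inj (hhc.symm.trans hpv))
          · rw [h] at ht; exact ht
        have h2 : pluralityScore C V m < pluralityScore C V M := by
          rcases hcm with h | h
          · rw [h, hpm] at hcgt; exact absurd hcgt (lt_irrefl _)
          · rw [h, hpm] at hcgt; exact hcgt
        have h3 := hmono m hmC
        have h4 := hw a haS
        rw [hpm] at h4
        omega
      · have hp0 : pluralityScore (insert a C) V p = 0 := hzeroS p hpm hpa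
        have h1 := hw a haS
        have h2 := hw m (Finset.mem_insert_of_mem hmC)
        omega
    · -- both extremes of insert a C are in C : scores unchanged on {m, M}
      have hMC2 : M' ∈ C := (Finset.mem_insert.mp hMS').resolve_left hMa
      have hM'M : M' = M := by
        have h := getLast_restrict_eq hLnd hMC2 hMSL
          (fun x hx hxC => hMSmax x hx (Finset.mem_insert_of_mem hxC))
        exact Option.some.inj (h.symm.trans hM)
      rw [hM'M] at hsum_lower
      have e1 := hmono m hmC
      have e2 := hmono M hMC
      have e3 := hmono p hp
      have h1 := hw c (Finset.mem_insert_of_mem hcC)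
      rcases hcm with h | h <;> rw [h] at h1 hcgt <;> omega
end

section
/- Let k be a positive integer, let C = {c_1, ..., c_m} be a finite candidate set, let L be a linear order on C with c_1 L c_2 L ... L c_m, and let V be a finite collection of linear-order votes on C, each of which is Dodgson_k-SP with respect to L. Then the plurality election (C, V) is (k+1)-local with respect to L. -/
variable {α : Type*} [DecidableEq α]

lemma head_filter_spec (p : α → Bool) :
    ∀ (v : List α) (c : α), (v.filter p).head? = some c →
      c ∈ v ∧ p c = true ∧ ∀ x ∈ v, p x = true → v.idxOf c ≤ v.idxOf x := by
  intro v
  induction v with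
  | nil => intro c h; simp at h
  | cons a t ih =>
    intro c h
    by_cases hpa : p a = true
    · rw [List.filter_cons_of_pos hpa] at h
      simp only [List.head?_cons, Option.some_inj] at h
      subst h
      exact ⟨List.mem_cons_self, hpa,
        fun x hx hpx => by simp [List.idxOf_cons_self]⟩
    · rw [List.filter_cons_of_neg hpa] at h
      obtain ⟨hc, hpc, hmin⟩ := ih c h
      have hca : a ≠ c := fun e => hpa (e ▸ hpc)
      refine ⟨List.mem_cons_of_mem _ hc, hpc, ?_⟩
      intro x hx hpx
      have hxa : a ≠ x := fun e => hpa (e ▸ hpx)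
      rcases List.mem_cons.mp hx with e | hx'
      · exact absurd e.symm hxa
      · rw [List.idxOf_cons_ne _ hca, List.idxOf_cons_ne _ hxa]
        exact Nat.succ_le_succ (hmin x hx' hpx)

lemma idxOf_filter_lt (p : α → Bool) :
    ∀ (l : List α), ∀ x ∈ l.filter p, ∀ y ∈ l.filter p,
      (l.filter p).idxOf x < (l.filter p).idxOf y → l.idxOf x < l.idxOf y := by
  intro l
  induction l with
  | nil => intro x hx; simp at hx
  | cons a t ih =>
    intro x hx y hy hlt
    by_cases hpa : p a = true
    · rw [List.filter_cons_of_pos hpa] at hx hy hlt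
      by_cases hxa : x = a
      · subst hxa
        have hya : y ≠ x := by
          intro e; subst e
          simp [List.idxOf_cons_self] at hlt
        rw [List.idxOf_cons_self, List.idxOf_cons_ne _ (Ne.symm hya)]
        exact Nat.succ_pos _
      · have hya : y ≠ a := by
          intro e; subst e
          rw [List.idxOf_cons_self] at hlt; omega
        have hx' : x ∈ t.filter p := by
          rcases List.mem_cons.mp hx with e | h
          · exact absurd e hxa
          · exact h
        have hy' : y ∈ t.filter p := by
          rcases List.mem_cons.mp hy with e | h
          · exact absurd e hya
          · exact h
        rw [List.idxOf_cons_ne _ (Ne.symm hxa), List.idxOf_cons_ne _ (Ne.symm hya)] at hlt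
        rw [List.idxOf_cons_ne _ (Ne.symm hxa), List.idxOf_cons_ne _ (Ne.symm hya)]
        exact Nat.succ_lt_succ (ih x hx' y hy' (Nat.lt_of_succ_lt_succ hlt))
    · rw [List.filter_cons_of_neg hpa] at hx hy hlt
      have hxa : x ≠ a := fun e => hpa (e ▸ (List.mem_filter.mp hx).2)
      have hya : y ≠ a := fun e => hpa (e ▸ (List.mem_filter.mp hy).2)
      rw [List.idxOf_cons_ne _ (Ne.symm hxa), List.idxOf_cons_ne _ (Ne.symm hya)]
      exact Nat.succ_lt_succ (ih x hx y hy hlt)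



lemma mem_take_drop_iff {l : List α} (h : l.Nodup) (a b : ℕ) (x : α) :
    x ∈ (l.drop a).take b ↔ x ∈ l ∧ a ≤ l.idxOf x ∧ l.idxOf x < a + b := by
  constructor
  · intro hx
    obtain ⟨m, hm, he⟩ := List.mem_iff_getElem.mp hx
    have hm' : m < b ∧ a + m < l.length := by
      simp [List.length_take, List.length_drop] at hm; omega
    rw [List.getElem_take, List.getElem_drop] at he
    have hmem : x ∈ l := he ▸ List.getElem_mem _
    have hidx : l.idxOf x = a + m := by
      rw [← he]; exact List.Nodup.idxOf_getElem h _ _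
    exact ⟨hmem, by omega, by omega⟩
  · rintro ⟨hmem, h1, h2⟩
    have hix : l.idxOf x < l.length := List.idxOf_lt_length_iff.mpr hmem
    apply List.mem_iff_getElem.mpr
    have hb : l.idxOf x - a < ((l.drop a).take b).length := by
      simp [List.length_take, List.length_drop]; omega
    refine ⟨l.idxOf x - a, hb, ?_⟩
    rw [List.getElem_take, List.getElem_drop]
    have : a + (l.idxOf x - a) = l.idxOf x := by omega
    have hgen : ∀ n (hn : n < l.length), n = l.idxOf x → l[n] = x := by
      intro n hn he; subst he; exact List.getElem_idxOf hn
    exact hgen _ (by omega) this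

def flips (s : Finset α) (v v' : List α) : Finset (α × α) :=
  (s ×ˢ s).filter fun q => Prefers v q.1 q.2 ∧ Prefers v' q.2 q.1

lemma flips_self (s : Finset α) (v : List α) : flips s v v = ∅ := by
  ext ⟨a, b⟩
  simp only [flips, Finset.mem_filter, Finset.notMem_empty, iff_false]
  rintro ⟨-, h1, h2⟩
  exact absurd h2 (Nat.lt_asymm h1)

lemma adjSwap_unique {u t : List α} {x y : α} (hnd : (u ++ x :: y :: t).Nodup) {a b : α}
    (hab : Prefers (u ++ x :: y :: t) a b) (hnab : ¬ Prefers (u ++ y :: x :: t) a b) :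
    a = x ∧ b = y := by
  have hninfo : x ∉ u ∧ y ∉ u ∧ x ≠ y := by
    simp [List.nodup_append, List.nodup_cons] at hnd
    exact ⟨fun h => (hnd.2.2 x h).1 rfl, fun h => (hnd.2.2 y h).2.1 rfl, hnd.2.1.1.1⟩
  obtain ⟨hxu, hyu, hxy⟩ := hninfo
  set v := u ++ x :: y :: t with hv
  set w := u ++ y :: x :: t with hw
  have hxv : v.idxOf x = u.length := by
    rw [hv, List.idxOf_append_of_notMem hxu, List.idxOf_cons_self]; omega
  have hyv : v.idxOf y = u.length + 1 := by
    rw [hv, List.idxOf_append_of_notMem hyu, List.idxOf_cons_ne _ hxy,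
      List.idxOf_cons_self]
  have hxw : w.idxOf x = u.length + 1 := by
    rw [hw, List.idxOf_append_of_notMem hxu, List.idxOf_cons_ne _ (Ne.symm hxy),
      List.idxOf_cons_self]
  have hyw : w.idxOf y = u.length := by
    rw [hw, List.idxOf_append_of_notMem hyu, List.idxOf_cons_self]; omega
  have hsame : ∀ z, z ≠ x → z ≠ y → v.idxOf z = w.idxOf z := by
    intro z hzx hzy
    by_cases hzu : z ∈ u
    · rw [hv, hw, List.idxOf_append_of_mem hzu, List.idxOf_append_of_mem hzu]
    · rw [hv, hw, List.idxOf_append_of_notMem hzu, List.idxOf_append_of_notMem hzu,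
        List.idxOf_cons_ne _ (Ne.symm hzx), List.idxOf_cons_ne _ (Ne.symm hzy),
        List.idxOf_cons_ne _ (Ne.symm hzy), List.idxOf_cons_ne _ (Ne.symm hzx)]
  have hlen : u.length + 1 < v.length := by
    rw [hv]; simp [List.length_append]
  unfold Prefers at hab hnab
  by_cases hax : a = x
  · subst hax
    by_cases hby : b = y
    · exact ⟨rfl, hby⟩
    · by_cases hbx : b = a
      · subst hbx; omega
      · have hb' : v.idxOf b = w.idxOf b := hsame b hbx hby
        have hbv : b ∈ v := List.idxOf_lt_length_iff.mp (by omega)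
        have : b = y := by
          have hyvm : y ∈ v := List.idxOf_lt_length_iff.mp (by omega)
          exact (List.idxOf_inj hbv).mp (by omega)
        exact absurd this hby
  · by_cases hay : a = y
    · subst hay
      by_cases hbx : b = x
      · subst hbx; omega
      · by_cases hby : b = a
        · subst hby; omega
        · have hb' : v.idxOf b = w.idxOf b := hsame b hbx hby
          omega
    · have ha' : v.idxOf a = w.idxOf a := hsame a hax hay
      by_cases hbx : b = x
      · subst hbx; omega
      · by_cases hby : b = y
        · subst hby
          have hav : a ∈ v := List.idxOf_lt_length_iff.mp (by omega)
          have hxvm : x ∈ v := List.idxOf_lt_length_iff.mp (by omega)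
          have : a = x := (List.idxOf_inj hav).mp (by omega)
          exact absurd this hax
        · have hb' : v.idxOf b = w.idxOf b := hsame b hbx hby
          omega

/-- A vote `v` is Dodgson_k-SP w.r.t. axis `L` on candidate set `C` if `v` is within
`k` adjacent swaps of some linear order on `C` that is single-peaked w.r.t. `L`. -/
def DodgsonSP (k : ℕ) (C : Finset α) (L v : List α) : Prop :=
  ∃ v', IsVoteOn C v' ∧ SinglePeaked L v' ∧ WithinSwaps k v v'


lemma withinSwaps_flips_card (s : Finset α) :
    ∀ (n : ℕ) (v v' : List α), v.Nodup → WithinSwaps n v v' → (flips s v v').card ≤ n := by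
  intro n
  induction n with
  | zero =>
    intro v v' _ h
    have hvv : v = v' := h
    rw [← hvv, flips_self]
    simp
  | succ n ih =>
    intro v v' hnd h
    rcases h with rfl | ⟨w, ⟨u, t0, x, y, hveq, hweq⟩, hws⟩
    · rw [flips_self]; simp
    · subst hveq; subst hweq
      have hperm : (u ++ x :: y :: t0).Perm (u ++ y :: x :: t0) :=
        List.Perm.append_left u (List.Perm.swap y x t0)
      have hndw : (u ++ y :: x :: t0).Nodup := hperm.nodup hnd
      have hsub : flips s (u ++ x :: y :: t0) v' ⊆
          insert (x, y) (flips s (u ++ y :: x :: t0) v') := by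
        rintro ⟨a, b⟩ hq
        simp only [flips, Finset.mem_filter, Finset.mem_product] at hq
        obtain ⟨⟨has, hbs⟩, h1, h2⟩ := hq
        by_cases hpw : Prefers (u ++ y :: x :: t0) a b
        · apply Finset.mem_insert_of_mem
          simp only [flips, Finset.mem_filter, Finset.mem_product]
          exact ⟨⟨has, hbs⟩, hpw, h2⟩
        · obtain ⟨ha, hb⟩ := adjSwap_unique hnd h1 hpw
          subst ha; subst hb
          exact Finset.mem_insert_self _ _
      calc (flips s (u ++ x :: y :: t0) v').card
          ≤ (insert (x, y) (flips s (u ++ y :: x :: t0) v')).card := Finset.card_le_card hsub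
        _ ≤ (flips s (u ++ y :: x :: t0) v').card + 1 := Finset.card_insert_le _ _
        _ ≤ n + 1 := Nat.succ_le_succ (ih _ v' hndw hws)

lemma head_restrict_spec {C : Finset α} {v : List α} {c : α}
    (h : (restrictList C v).head? = some c) :
    c ∈ v ∧ c ∈ C ∧ ∀ x ∈ v, x ∈ C → v.idxOf c ≤ v.idxOf x := by
  obtain ⟨h1, h2, h3⟩ := head_filter_spec _ v c h
  exact ⟨h1, by simpa using h2, fun x hx hxC => h3 x hx (by simpa using hxC)⟩

lemma restrict_head_exists {C : Finset α} {v : List α} {c : α}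
    (hc : c ∈ v) (hcC : c ∈ C) : ∃ d, (restrictList C v).head? = some d := by
  cases he : (restrictList C v).head? with
  | some d => exact ⟨d, rfl⟩
  | none =>
    rw [List.head?_eq_none_iff] at he
    have hmem : c ∈ restrictList C v := by
      simp [restrictList, List.mem_filter, hc, hcC]
    rw [he] at hmem
    simp at hmem

lemma prefers_of_le_ne {v : List α} {x y : α} (hx : x ∈ v) (hy : y ∈ v)
    (hle : v.idxOf x ≤ v.idxOf y) (hne : x ≠ y) : Prefers v x y :=
  lt_of_le_of_ne hle fun h => hne ((List.idxOf_inj hx).mp h)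

lemma no_far_winner (k : ℕ) (C : Finset α) (L : List α) (hL : IsVoteOn C L)
    (v v' : List α) (hv : IsVoteOn C v) (hv' : IsVoteOn C v')
    (hSP : SinglePeaked L v') (hWS : WithinSwaps k v v')
    (c d : α) (hcC : c ∈ C) (hdC : d ∈ C)
    (e : ℕ → α)
    (heC : ∀ j ≤ k, e j ∈ C)
    (hec : ∀ j ≤ k, e j ≠ c) (hed : ∀ j ≤ k, e j ≠ d)
    (heinj : ∀ j1, j1 ≤ k → ∀ j2, j2 ≤ k → e j1 = e j2 → j1 = j2)
    (haxis : ∀ j ≤ k, (Prefers L c (e j) ∧ Prefers L (e j) d) ∨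
      (Prefers L d (e j) ∧ Prefers L (e j) c))
    (hcv : ∀ j ≤ k, Prefers v c (e j)) (hdv : ∀ j ≤ k, Prefers v d (e j)) :
    False := by
  have hcard := withinSwaps_flips_card C k v v' hv.1 hWS
  set f : ℕ → α × α := fun j => if Prefers v' (e j) c then (c, e j) else (d, e j) with hf
  have hsnd : ∀ j, (f j).2 = e j := by
    intro j; by_cases h : Prefers v' (e j) c <;> simp [hf, h]
  have hmaps : ∀ j ∈ Finset.range (k+1), f j ∈ flips C v v' := by
    intro j hj
    rw [Finset.mem_range] at hj
    have hjk : j ≤ k := by omega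
    by_cases h : Prefers v' (e j) c
    · simp only [hf, if_pos h, flips, Finset.mem_filter, Finset.mem_product]
      exact ⟨⟨hcC, heC j hjk⟩, hcv j hjk, h⟩
    · have hev' : e j ∈ v' := (hv'.2 _).mpr (heC j hjk)
      have hcv' : c ∈ v' := (hv'.2 _).mpr hcC
      have hc'e : Prefers v' c (e j) :=
        prefers_of_le_ne hcv' hev' (not_lt.mp h) (fun hh => hec j hjk hh.symm)
      have hd' : Prefers v' (e j) d :=
        hSP c (e j) d ((hL.2 _).mpr hcC) ((hL.2 _).mpr (heC j hjk)) ((hL.2 _).mpr hdC)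
          (haxis j hjk) hc'e
      simp only [hf, if_neg h, flips, Finset.mem_filter, Finset.mem_product]
      exact ⟨⟨hdC, heC j hjk⟩, hdv j hjk, hd'⟩
  have hinj : Set.InjOn f (Finset.range (k+1)) := by
    intro j1 hj1 j2 hj2 hfe
    simp only [Finset.coe_range, Set.mem_Iio] at hj1 hj2
    have he12 : e j1 = e j2 := by rw [← hsnd j1, ← hsnd j2, hfe]
    exact heinj j1 (by omega) j2 (by omega) he12
  have hle := Finset.card_le_card_of_injOn f hmaps hinj
  rw [Finset.card_range] at hle
  omega

lemma key_iff (k : ℕ) (C : Finset α) (L : List α) (hL : IsVoteOn C L)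
    (C' : Finset α) (hC' : C' ⊆ C) (c : α) (hcC' : c ∈ C')
    (v : List α) (hv : IsVoteOn C v) (hdk : DodgsonSP k C L v) :
    (restrictList (nbhd (k+1) L C' c) v).head? = some c ↔
      (restrictList C' v).head? = some c := by
  have hndR : (restrictList C' L).Nodup := hL.1.filter _
  have hmemR : ∀ x, x ∈ restrictList C' L ↔ x ∈ C' := by
    intro x
    simp only [restrictList, List.mem_filter, decide_eq_true_eq]
    exact ⟨fun h => h.2, fun h => ⟨(hL.2 x).mpr (hC' h), h⟩⟩
  have hcR : c ∈ restrictList C' L := (hmemR c).mpr hcC'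
  have hilen : (restrictList C' L).idxOf c < (restrictList C' L).length :=
    List.idxOf_lt_length_iff.mpr hcR
  have hmemN : ∀ x, x ∈ nbhd (k+1) L C' c ↔
      x ∈ restrictList C' L ∧
        (restrictList C' L).idxOf c - (k+1) ≤ (restrictList C' L).idxOf x ∧
        (restrictList C' L).idxOf x < (restrictList C' L).idxOf c + (k+1) + 1 := by
    intro x
    unfold nbhd
    rw [List.mem_toFinset, mem_take_drop_iff hndR]
    constructor <;> rintro ⟨h1, h2, h3⟩ <;> exact ⟨h1, h2, by omega⟩
  have hNC' : ∀ x ∈ nbhd (k+1) L C' c, x ∈ C' :=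
    fun x hx => (hmemR x).mp ((hmemN x).mp hx).1
  have hcN : c ∈ nbhd (k+1) L C' c := (hmemN c).mpr ⟨hcR, by omega, by omega⟩
  have hcv : c ∈ v := (hv.2 c).mpr (hC' hcC')
  have hRL : ∀ x ∈ restrictList C' L, ∀ y ∈ restrictList C' L,
      (restrictList C' L).idxOf x < (restrictList C' L).idxOf y → Prefers L x y :=
    fun x hx y hy h => idxOf_filter_lt _ L x hx y hy h
  constructor
  · -- N-head = c → C'-head = c
    intro hNh
    obtain ⟨-, -, hminN⟩ := head_restrict_spec hNh
    obtain ⟨d, hd⟩ := restrict_head_exists hcv hcC'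
    obtain ⟨hdv, hdC', hminC'⟩ := head_restrict_spec hd
    by_cases hdc : d = c
    · rw [hdc] at hd; exact hd
    · exfalso
      have hdR : d ∈ restrictList C' L := (hmemR d).mpr hdC'
      have hDlen : (restrictList C' L).idxOf d < (restrictList C' L).length :=
        List.idxOf_lt_length_iff.mpr hdR
      have hdN : d ∉ nbhd (k+1) L C' c := by
        intro hdN
        exact hdc ((List.idxOf_inj hdv).mp
          (le_antisymm (hminC' c hcv hcC') (hminN d hdv hdN)))
      rw [hmemN d] at hdN
      have hcase : (restrictList C' L).idxOf d + (k+1) < (restrictList C' L).idxOf c ∨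
          (restrictList C' L).idxOf c + (k+1) + 1 ≤ (restrictList C' L).idxOf d := by
        by_contra hcon
        push_neg at hcon
        exact hdN ⟨hdR, by omega, by omega⟩
      obtain ⟨v', hv', hSP, hWS⟩ := hdk
      have hdCfull : d ∈ C := hC' hdC'
      -- common facts about elements of the restricted axis
      have hgetfacts : ∀ m, m < (restrictList C' L).length →
          (restrictList C' L).idxOf ((restrictList C' L).getD m c) = m ∧
          (restrictList C' L).getD m c ∈ restrictList C' L := by
        intro m hm
        rw [List.getD_eq_getElem _ _ hm]
        exact ⟨List.Nodup.idxOf_getElem hndR _ _, List.getElem_mem _⟩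
      rcases hcase with hlt | hgt
      · -- d is far to the left of c on the axis
        set e : ℕ → α := fun j => (restrictList C' L).getD ((restrictList C' L).idxOf c - (1+j)) c with he
        have hbase : ∀ j, j ≤ k → (restrictList C' L).idxOf (e j) = (restrictList C' L).idxOf c - (1+j) ∧
            e j ∈ restrictList C' L := fun j hj => hgetfacts _ (by omega)
        have heC' : ∀ j, j ≤ k → e j ∈ C' := fun j hj => (hmemR _).mp (hbase j hj).2
        have heC : ∀ j, j ≤ k → e j ∈ C := fun j hj => hC' (heC' j hj)
        have hec : ∀ j, j ≤ k → e j ≠ c := by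
          intro j hj hh
          have hx := (hbase j hj).1
          rw [hh] at hx
          omega
        have hed : ∀ j, j ≤ k → e j ≠ d := by
          intro j hj hh
          have hx := (hbase j hj).1
          rw [hh] at hx
          omega
        have heinj : ∀ j1, j1 ≤ k → ∀ j2, j2 ≤ k → e j1 = e j2 → j1 = j2 := by
          intro j1 h1 j2 h2 hh
          have e1 := (hbase j1 h1).1
          have e2 := (hbase j2 h2).1
          rw [hh] at e1
          omega
        have haxis : ∀ j, j ≤ k → (Prefers L c (e j) ∧ Prefers L (e j) d) ∨
            (Prefers L d (e j) ∧ Prefers L (e j) c) := by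
          intro j hj
          obtain ⟨hgi, hgR⟩ := hbase j hj
          exact Or.inr ⟨hRL d hdR _ hgR (by omega), hRL _ hgR c hcR (by omega)⟩
        have heN : ∀ j, j ≤ k → e j ∈ nbhd (k+1) L C' c := by
          intro j hj
          obtain ⟨hgi, hgR⟩ := hbase j hj
          exact (hmemN _).mpr ⟨hgR, by omega, by omega⟩
        have hev : ∀ j, j ≤ k → e j ∈ v := fun j hj => (hv.2 _).mpr (heC j hj)
        have hcvp : ∀ j, j ≤ k → Prefers v c (e j) := fun j hj =>
          prefers_of_le_ne hcv (hev j hj) (hminN _ (hev j hj) (heN j hj))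
            (fun hh => hec j hj hh.symm)
        have hdvp : ∀ j, j ≤ k → Prefers v d (e j) := fun j hj =>
          prefers_of_le_ne hdv (hev j hj) (hminC' _ (hev j hj) (heC' j hj))
            (fun hh => hed j hj hh.symm)
        exact no_far_winner k C L hL v v' hv hv' hSP hWS c d (hC' hcC') hdCfull e
          heC hec hed heinj haxis hcvp hdvp
      · -- d is far to the right of c on the axis
        set e : ℕ → α := fun j => (restrictList C' L).getD ((restrictList C' L).idxOf c + 1 + j) c with he
        have hbase : ∀ j, j ≤ k → (restrictList C' L).idxOf (e j) = (restrictList C' L).idxOf c + 1 + j ∧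
            e j ∈ restrictList C' L := fun j hj => hgetfacts _ (by omega)
        have heC' : ∀ j, j ≤ k → e j ∈ C' := fun j hj => (hmemR _).mp (hbase j hj).2
        have heC : ∀ j, j ≤ k → e j ∈ C := fun j hj => hC' (heC' j hj)
        have hec : ∀ j, j ≤ k → e j ≠ c := by
          intro j hj hh
          have hx := (hbase j hj).1
          rw [hh] at hx
          omega
        have hed : ∀ j, j ≤ k → e j ≠ d := by
          intro j hj hh
          have hx := (hbase j hj).1
          rw [hh] at hx
          omega
        have heinj : ∀ j1, j1 ≤ k → ∀ j2, j2 ≤ k → e j1 = e j2 → j1 = j2 := by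
          intro j1 h1 j2 h2 hh
          have e1 := (hbase j1 h1).1
          have e2 := (hbase j2 h2).1
          rw [hh] at e1
          omega
        have haxis : ∀ j, j ≤ k → (Prefers L c (e j) ∧ Prefers L (e j) d) ∨
            (Prefers L d (e j) ∧ Prefers L (e j) c) := by
          intro j hj
          obtain ⟨hgi, hgR⟩ := hbase j hj
          exact Or.inl ⟨hRL c hcR _ hgR (by omega), hRL _ hgR d hdR (by omega)⟩
        have heN : ∀ j, j ≤ k → e j ∈ nbhd (k+1) L C' c := by
          intro j hj
          obtain ⟨hgi, hgR⟩ := hbase j hj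
          exact (hmemN _).mpr ⟨hgR, by omega, by omega⟩
        have hev : ∀ j, j ≤ k → e j ∈ v := fun j hj => (hv.2 _).mpr (heC j hj)
        have hcvp : ∀ j, j ≤ k → Prefers v c (e j) := fun j hj =>
          prefers_of_le_ne hcv (hev j hj) (hminN _ (hev j hj) (heN j hj))
            (fun hh => hec j hj hh.symm)
        have hdvp : ∀ j, j ≤ k → Prefers v d (e j) := fun j hj =>
          prefers_of_le_ne hdv (hev j hj) (hminC' _ (hev j hj) (heC' j hj))
            (fun hh => hed j hj hh.symm)
        exact no_far_winner k C L hL v v' hv hv' hSP hWS c d (hC' hcC') hdCfull e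
          heC hec hed heinj haxis hcvp hdvp
  · -- C'-head = c → N-head = c
    intro hCh
    obtain ⟨-, -, hminC'⟩ := head_restrict_spec hCh
    obtain ⟨e0, he0⟩ := restrict_head_exists hcv hcN
    obtain ⟨he0v, he0N, hminN⟩ := head_restrict_spec he0
    have he0c : e0 = c := (List.idxOf_inj he0v).mp
      (le_antisymm (hminN c hcv hcN) (hminC' e0 he0v (hNC' e0 he0N)))
    rw [he0c] at he0
    exact he0

/-- If every vote in `V` is Dodgson_k-SP w.r.t. the societal axis `L`,
then the plurality election `(C, V)` is `(k+1)`-local w.r.t. `L`. -/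
theorem dodgsonSP_kLocal
    (k : ℕ) (hk : 1 ≤ k) (C : Finset α) (L : List α) (hL : IsVoteOn C L)
    (V : List (List α))
    (hV : ∀ v ∈ V, IsVoteOn C v ∧ DodgsonSP k C L v) :
    KLocal (k + 1) L C V := by
  intro C' hC' c hcC'
  unfold pluralityScore
  apply List.countP_congr
  intro v hv
  obtain ⟨hvo, hdk⟩ := hV v hv
  simp only [decide_eq_true_eq]
  exact key_iff k C L hL C' hC' c hcC' v hvo hdk
end

section
/- Let k be a positive integer, let C = {c_1, ..., c_m} be a finite candidate set, let L be a linear order on C with c_1 L c_2 L ... L c_m, and let V be a finite collection of linear-order votes on C, each of which is PerceptionFlip_k-SP with respect to L. Then the plurality election (C, V) is (k+1)-local with respect to L. -/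
variable {α : Type*} [DecidableEq α]

/-- A vote `v` is PerceptionFlip_k-SP w.r.t. axis `L` on candidate set `C` if `v` is
single-peaked w.r.t. some linear order `L'` on `C` that is within `k` adjacent swaps
of `L`. -/
def PerceptionFlipSP (k : ℕ) (C : Finset α) (L v : List α) : Prop :=
  ∃ L', IsVoteOn C L' ∧ WithinSwaps k L L' ∧ SinglePeaked L' v

lemma mem_restrict {C : Finset α} {l : List α} {a : α} :
    a ∈ restrictList C l ↔ a ∈ l ∧ a ∈ C := by
  simp [restrictList]

lemma restrict_nodup {C : Finset α} {l : List α} (h : l.Nodup) :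
    (restrictList C l).Nodup := h.filter _

-- T3: filter preserves relative order
lemma filter_idxOf_mono (p : α → Bool) :
    ∀ (l : List α), l.Nodup → ∀ a b, a ∈ l.filter p → b ∈ l.filter p →
      (l.filter p).idxOf a < (l.filter p).idxOf b → l.idxOf a < l.idxOf b := by
  intro l
  induction l with
  | nil => intro _ a b ha; simp at ha
  | cons h tl ih =>
    intro hnd a b ha hb hlt
    rcases List.nodup_cons.1 hnd with ⟨hh, htl⟩
    by_cases hp : p h
    · rw [List.filter_cons_of_pos hp] at ha hb hlt
      by_cases hah : a = h
      · subst hah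
        have hba : b ≠ a := by
          rintro rfl; exact lt_irrefl _ hlt
        rw [List.idxOf_cons_self] at hlt ⊢
        rw [List.idxOf_cons_ne _ (Ne.symm hba)]
        exact Nat.succ_pos _
      · have hbh : b ≠ h := by
          rintro rfl
          rw [List.idxOf_cons_self, List.idxOf_cons_ne _ (Ne.symm hah)] at hlt
          omega
        rw [List.idxOf_cons_ne _ (Ne.symm hah), List.idxOf_cons_ne _ (Ne.symm hbh)] at hlt ⊢
        have ha' : a ∈ tl.filter p := by
          rcases List.mem_cons.1 ha with h1 | h1
          · exact absurd h1 hah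
          · exact h1
        have hb' : b ∈ tl.filter p := by
          rcases List.mem_cons.1 hb with h1 | h1
          · exact absurd h1 hbh
          · exact h1
        exact Nat.succ_lt_succ (ih htl a b ha' hb' (Nat.lt_of_succ_lt_succ hlt))
    · rw [List.filter_cons_of_neg hp] at ha hb hlt
      have hah : a ≠ h := by rintro rfl; exact hp (List.of_mem_filter ha)
      have hbh : b ≠ h := by rintro rfl; exact hp (List.of_mem_filter hb)
      rw [List.idxOf_cons_ne _ (Ne.symm hah), List.idxOf_cons_ne _ (Ne.symm hbh)]
      exact Nat.succ_lt_succ (ih htl a b ha hb hlt)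

-- T4: head of a restricted list is preferred to all other members
lemma head_restrict_prefers {C : Finset α} {v : List α} {a b : α}
    (hv : v.Nodup) (ha : (restrictList C v).head? = some a)
    (hb : b ∈ restrictList C v) (hab : a ≠ b) : Prefers v a b := by
  have hfn : (restrictList C v).Nodup := restrict_nodup hv
  obtain ⟨t, ht⟩ : ∃ t, restrictList C v = a :: t := by
    cases h : restrictList C v with
    | nil => rw [h] at ha; simp at ha
    | cons x t => rw [h] at ha; simp at ha; exact ⟨t, by rw [ha]⟩
  have hma : a ∈ restrictList C v := by rw [ht]; exact List.mem_cons_self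
  have hia : (restrictList C v).idxOf a = 0 := by rw [ht]; exact List.idxOf_cons_self
  have hib : (restrictList C v).idxOf b ≠ 0 := by
    intro h0
    exact hab ((List.idxOf_inj hma).1 (by rw [hia, h0]))
  have key : (restrictList C v).idxOf a < (restrictList C v).idxOf b := by
    rw [hia]; exact Nat.pos_of_ne_zero hib
  exact filter_idxOf_mono _ v hv a b hma hb key

lemma adjSwap_perm {l l' : List α} (h : AdjSwap l l') : l.Perm l' := by
  obtain ⟨u, w, x, y, rfl, rfl⟩ := h
  exact List.Perm.append_left u (List.Perm.swap y x w)

-- T5: an adjacent swap changes relative order of exactly one pair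
lemma adjSwap_pairs {l l' : List α} (hnd : l.Nodup) (h : AdjSwap l l') :
    ∃ x y : α, ∀ a b : α, (a, b) ≠ (x, y) → (a, b) ≠ (y, x) →
      (Prefers l a b ↔ Prefers l' a b) := by
  obtain ⟨u, w, x, y, rfl, rfl⟩ := h
  refine ⟨x, y, ?_⟩
  set n := u.length with hn
  have hnd' := hnd
  rw [List.nodup_append] at hnd'
  obtain ⟨hu, hxyw, hdisj⟩ := hnd'
  rw [List.nodup_cons] at hxyw
  obtain ⟨hxyw1, hxyw2⟩ := hxyw
  rw [List.nodup_cons] at hxyw2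
  obtain ⟨hyw, hwnd⟩ := hxyw2
  have hxy : x ≠ y := fun h => hxyw1 (h ▸ List.mem_cons_self)
  have hxu : x ∉ u := fun h => hdisj x h x List.mem_cons_self rfl
  have hyu : y ∉ u := fun h => hdisj y h y (List.mem_cons.2 (Or.inr (List.mem_cons_self))) rfl
  have hxw : x ∉ w := fun h => hxyw1 (List.mem_cons.2 (Or.inr h))
  -- index facts
  have ix : (u ++ x :: y :: w).idxOf x = n := by
    rw [List.idxOf_append_of_notMem hxu, List.idxOf_cons_self]; omega
  have iy : (u ++ x :: y :: w).idxOf y = n + 1 := by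
    rw [List.idxOf_append_of_notMem hyu, List.idxOf_cons_ne _ hxy,
      List.idxOf_cons_self]
  have ix' : (u ++ y :: x :: w).idxOf x = n + 1 := by
    rw [List.idxOf_append_of_notMem hxu, List.idxOf_cons_ne _ (Ne.symm hxy),
      List.idxOf_cons_self]
  have iy' : (u ++ y :: x :: w).idxOf y = n := by
    rw [List.idxOf_append_of_notMem hyu, List.idxOf_cons_self]; omega
  have heq : ∀ z, z ≠ x → z ≠ y →
      (u ++ x :: y :: w).idxOf z = (u ++ y :: x :: w).idxOf z := by
    intro z hzx hzy
    by_cases hzu : z ∈ u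
    · rw [List.idxOf_append_of_mem hzu, List.idxOf_append_of_mem hzu]
    · rw [List.idxOf_append_of_notMem hzu, List.idxOf_append_of_notMem hzu,
        List.idxOf_cons_ne _ (Ne.symm hzx), List.idxOf_cons_ne _ (Ne.symm hzy),
        List.idxOf_cons_ne _ (Ne.symm hzy), List.idxOf_cons_ne _ (Ne.symm hzx)]
  have hne : ∀ z, z ≠ x → z ≠ y →
      (u ++ x :: y :: w).idxOf z ≠ n ∧ (u ++ x :: y :: w).idxOf z ≠ n + 1 := by
    intro z hzx hzy
    by_cases hzu : z ∈ u
    · have : (u ++ x :: y :: w).idxOf z < n := by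
        rw [List.idxOf_append_of_mem hzu]
        exact List.idxOf_lt_length_iff.2 hzu
      omega
    · have : n + 2 ≤ (u ++ x :: y :: w).idxOf z := by
        rw [List.idxOf_append_of_notMem hzu, List.idxOf_cons_ne _ (Ne.symm hzx),
          List.idxOf_cons_ne _ (Ne.symm hzy)]
        omega
      omega
  intro a b hab1 hab2
  unfold Prefers
  by_cases hax : a = x
  · subst hax
    by_cases hby : b = y
    · exact absurd (by rw [hby]) hab1
    · by_cases hbx : b = a
      · subst hbx; omega
      · have h1 := heq b hbx hby
        have h2 := hne b hbx hby
        rw [ix, ix', ← h1]; omega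
  · by_cases hay : a = y
    · subst hay
      by_cases hbx : b = x
      · exact absurd (by rw [hbx]) hab2
      · by_cases hby : b = a
        · subst hby; omega
        · have h1 := heq b hbx hby
          have h2 := hne b hbx hby
          rw [iy, iy', ← h1]; omega
    · have h1 := heq a hax hay
      have h2 := hne a hax hay
      by_cases hbx : b = x
      · subst hbx; rw [ix, ix', ← h1]; omega
      · by_cases hby : b = y
        · subst hby; rw [iy, iy', ← h1]; omega
        · have h3 := heq b hbx hby
          rw [← h1, ← h3]

lemma withinSwaps_pairs :
    ∀ (k : ℕ) (l l' : List α), l.Nodup → WithinSwaps k l l' →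
      ∃ P : List (α × α), P.length ≤ k ∧
        ∀ a b : α, (a, b) ∉ P → (b, a) ∉ P → (Prefers l a b ↔ Prefers l' a b) := by
  intro k
  induction k with
  | zero => intro l l' _ h; exact ⟨[], le_refl _, by cases h; intro a b _ _; rfl⟩
  | succ k ih =>
    intro l l' hnd h
    rcases h with rfl | ⟨l'', hsw, hw⟩
    · exact ⟨[], Nat.zero_le _, by intro a b _ _; rfl⟩
    · obtain ⟨x, y, hxy⟩ := adjSwap_pairs hnd hsw
      have hnd'' : l''.Nodup := (adjSwap_perm hsw).nodup_iff.1 hnd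
      obtain ⟨P, hP, hPiff⟩ := ih l'' l' hnd'' hw
      refine ⟨(x, y) :: P, by simpa using hP, ?_⟩
      intro a b hab1 hab2
      rw [List.mem_cons] at hab1 hab2
      push_neg at hab1 hab2
      have h2 : (a, b) ≠ (y, x) := by
        intro hc
        exact hab2.1 (by rw [Prod.ext_iff] at hc ⊢; exact ⟨hc.2, hc.1⟩)
      exact (hxy a b hab1.1 h2).trans (hPiff a b hab1.2 hab2.2)

lemma mem_nbhd_iff {K : ℕ} {L : List α} (hL : L.Nodup) {C' : Finset α} {c z : α}
    (hc : c ∈ restrictList C' L) :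
    z ∈ nbhd K L C' c ↔ z ∈ restrictList C' L ∧
      (restrictList C' L).idxOf c - K ≤ (restrictList C' L).idxOf z ∧
      (restrictList C' L).idxOf z ≤ (restrictList C' L).idxOf c + K := by
  have hRnd : (restrictList C' L).Nodup := restrict_nodup hL
  set R := restrictList C' L with hR
  set i := R.idxOf c with hi
  have hilen : i < R.length := List.idxOf_lt_length_iff.2 hc
  rw [nbhd, List.mem_toFinset, ← hR, ← hi]
  constructor
  · intro hz
    have hzR : z ∈ R := List.mem_of_mem_drop (List.mem_of_mem_take hz)
    obtain ⟨m, hm, hget⟩ := List.getElem_of_mem hz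
    have hm2 := hm
    rw [List.length_take, List.length_drop] at hm2
    have hm' : m < (R.drop (i - K)).length := by rw [List.length_drop]; omega
    rw [List.getElem_take, List.getElem_drop] at hget
    have hidx : R.idxOf z = (i - K) + m := by
      rw [← hget]; exact List.Nodup.idxOf_getElem hRnd _ _
    refine ⟨hzR, ?_, ?_⟩ <;> omega
  · rintro ⟨hzR, h1, h2⟩
    set m := R.idxOf z with hm
    have hmlen : m < R.length := List.idxOf_lt_length_iff.2 hzR
    have hlen : m - (i - K) < ((R.drop (i - K)).take (i + K + 1 - (i - K))).length := by
      rw [List.length_take, List.length_drop]; omega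
    have hkey : ((R.drop (i - K)).take (i + K + 1 - (i - K)))[m - (i-K)]'hlen = z := by
      rw [List.getElem_take, List.getElem_drop]
      have h3 : R.idxOf (R[i - K + (m - (i - K))]'(by rw [List.length_take, List.length_drop] at hlen; omega)) = i - K + (m - (i - K)) :=
        List.Nodup.idxOf_getElem hRnd _ _
      refine (List.idxOf_inj (List.getElem_mem _)).1 ?_
      rw [h3, ← hm]; omega
    rw [← hkey]
    exact List.getElem_mem _

lemma restrict_prefers {C : Finset α} {l : List α} (hl : l.Nodup) {a b : α}
    (ha : a ∈ restrictList C l) (hb : b ∈ restrictList C l)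
    (h : Prefers (restrictList C l) a b) : Prefers l a b :=
  filter_idxOf_mono _ l hl a b ha hb h

lemma head_restrict_subset {N C' : Finset α} (hNC : ∀ x ∈ N, x ∈ C') {v : List α} {c : α}
    (hc : c ∈ N) (h : (restrictList C' v).head? = some c) :
    (restrictList N v).head? = some c := by
  have key : restrictList N v = restrictList N (restrictList C' v) := by
    unfold restrictList
    rw [List.filter_filter]
    refine List.filter_congr ?_
    intro a _
    by_cases haN : a ∈ N
    · simp [haN, hNC a haN]
    · simp [haN]
  rw [key]
  obtain ⟨rest, hrest⟩ : ∃ rest, restrictList C' v = c :: rest := by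
    cases hd : restrictList C' v with
    | nil => rw [hd] at h; simp at h
    | cons x t => rw [hd] at h; simp at h; exact ⟨t, by rw [h]⟩
  rw [hrest]
  unfold restrictList
  rw [List.filter_cons_of_pos (by simpa using hc)]
  simp

lemma exists_between_window {R : List α} (hRnd : R.Nodup) {c d : α}
    (hc : c ∈ R) (hd : d ∈ R) (K : ℕ)
    (hfar : R.idxOf d < R.idxOf c - K ∨ R.idxOf c + K < R.idxOf d) :
    ∃ S : List α, S.length = K ∧ S.Nodup ∧ ∀ z ∈ S, z ∈ R ∧
      R.idxOf c - K ≤ R.idxOf z ∧ R.idxOf z ≤ R.idxOf c + K ∧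
      ((R.idxOf c < R.idxOf z ∧ R.idxOf z < R.idxOf d) ∨
       (R.idxOf d < R.idxOf z ∧ R.idxOf z < R.idxOf c)) := by
  set i := R.idxOf c with hi
  set j := R.idxOf d with hj
  have hilen : i < R.length := List.idxOf_lt_length_iff.2 hc
  have hjlen : j < R.length := List.idxOf_lt_length_iff.2 hd
  have main : ∀ s : ℕ, s + K ≤ R.length →
      ∀ z ∈ (R.drop s).take K, z ∈ R ∧ s ≤ R.idxOf z ∧ R.idxOf z < s + K := by
    intro s hs z hz
    have hzR : z ∈ R := List.mem_of_mem_drop (List.mem_of_mem_take hz)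
    obtain ⟨m, hm, hget⟩ := List.getElem_of_mem hz
    have hm2 := hm
    rw [List.length_take, List.length_drop] at hm2
    rw [List.getElem_take, List.getElem_drop] at hget
    have hidx : R.idxOf z = s + m := by
      rw [← hget]; exact List.Nodup.idxOf_getElem hRnd _ _
    exact ⟨hzR, by omega, by omega⟩
  rcases hfar with hlt | hgt
  · -- j < i - K : take positions i-K .. i-1
    refine ⟨(R.drop (i - K)).take K, ?_, ?_, ?_⟩
    · rw [List.length_take, List.length_drop]; omega
    · exact (((R.drop (i-K)).take_sublist K).trans (R.drop_sublist _)).nodup hRnd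
    · intro z hz
      obtain ⟨hzR, h1, h2⟩ := main (i - K) (by omega) z hz
      exact ⟨hzR, by omega, by omega, Or.inr ⟨by omega, by omega⟩⟩
  · -- i + K < j : take positions i+1 .. i+K
    refine ⟨(R.drop (i + 1)).take K, ?_, ?_, ?_⟩
    · rw [List.length_take, List.length_drop]; omega
    · exact (((R.drop (i+1)).take_sublist K).trans (R.drop_sublist _)).nodup hRnd
    · intro z hz
      obtain ⟨hzR, h1, h2⟩ := main (i + 1) (by omega) z hz
      exact ⟨hzR, by omega, by omega, Or.inl ⟨by omega, by omega⟩⟩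

lemma exists_good (c d : α) (hcd : c ≠ d) (S : List α) (hSnd : S.Nodup)
    (hcS : c ∉ S) (hdS : d ∉ S) (P : List (α × α)) (hlen : P.length < S.length) :
    ∃ z ∈ S, (c, z) ∉ P ∧ (z, c) ∉ P ∧ (d, z) ∉ P ∧ (z, d) ∉ P := by
  by_contra hcon
  push_neg at hcon
  classical
  set f : α → α × α := fun z =>
    if (c, z) ∈ P then (c, z) else if (z, c) ∈ P then (z, c)
    else if (d, z) ∈ P then (d, z) else (z, d) with hf
  have hform : ∀ z, f z = (c, z) ∨ f z = (z, c) ∨ f z = (d, z) ∨ f z = (z, d) := by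
    intro z; rw [hf]; dsimp only; split_ifs <;> tauto
  have hmaps : ∀ z ∈ S.toFinset, f z ∈ P.toFinset := by
    intro z hz
    rw [List.mem_toFinset] at hz
    have := hcon z hz
    rw [List.mem_toFinset, hf]; dsimp only
    split_ifs with h1 h2 h3
    · exact h1
    · exact h2
    · exact h3
    · tauto
  have hinj : Set.InjOn f ↑S.toFinset := by
    intro z hz z' hz' hfz
    rw [Finset.mem_coe, List.mem_toFinset] at hz hz'
    have hzc : z ≠ c := fun h => hcS (h ▸ hz)
    have hzd : z ≠ d := fun h => hdS (h ▸ hz)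
    have hz'c : z' ≠ c := fun h => hcS (h ▸ hz')
    have hz'd : z' ≠ d := fun h => hdS (h ▸ hz')
    rcases hform z with h1 | h1 | h1 | h1 <;> rcases hform z' with h2 | h2 | h2 | h2 <;>
      rw [h1, h2, Prod.ext_iff] at hfz <;> simp only [] at hfz <;>
      first
      | exact hfz.2
      | exact hfz.1
      | (exact absurd hfz.1.symm hz'c)
      | (exact absurd hfz.1 hzd)
      | (exact absurd hfz.1.symm hz'd)
      | (exact absurd hfz.1 hcd)
      | (exact absurd hfz.1.symm hcd)
      | (exact absurd hfz.2 hzc)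
      | (exact absurd hfz.2.symm hz'c)
      | (exact absurd hfz.2 hzd)
      | (exact absurd hfz.2.symm hz'd)
      | (exact absurd hfz.1 hzc)
  have h1 : S.toFinset.card ≤ P.toFinset.card :=
    Finset.card_le_card_of_injOn f hmaps hinj
  have h2 : S.toFinset.card = S.length := List.toFinset_card_of_nodup hSnd
  have h3 : P.toFinset.card ≤ P.length := List.toFinset_card_le P
  omega

/-- If every vote in `V` is PerceptionFlip_k-SP w.r.t. the societal axis
`L`, then the plurality election `(C, V)` is `(k+1)`-local w.r.t. `L`. -/
theorem perceptionFlipSP_kLocal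
    (k : ℕ) (hk : 1 ≤ k) (C : Finset α) (L : List α) (hL : IsVoteOn C L)
    (V : List (List α))
    (hV : ∀ v ∈ V, IsVoteOn C v ∧ PerceptionFlipSP k C L v) :
    KLocal (k + 1) L C V := by
  obtain ⟨hLnd, hLmem⟩ := hL
  intro C' hC' c hc
  unfold pluralityScore
  apply List.countP_congr
  intro v hv
  obtain ⟨⟨hvnd, hvmem⟩, L', ⟨hL'nd, hL'mem⟩, hWS, hSP⟩ := hV v hv
  simp only [decide_eq_true_eq]
  set K := k + 1 with hK
  set R := restrictList C' L with hR
  have hRnd : R.Nodup := restrict_nodup hLnd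
  have hcR : c ∈ R := mem_restrict.2 ⟨(hLmem c).2 (hC' hc), hc⟩
  have hN : ∀ z, z ∈ nbhd K L C' c ↔ z ∈ R ∧
      R.idxOf c - K ≤ R.idxOf z ∧ R.idxOf z ≤ R.idxOf c + K :=
    fun z => mem_nbhd_iff hLnd hcR
  have hNsub : ∀ x ∈ nbhd K L C' c, x ∈ C' := fun x hx =>
    (mem_restrict.1 ((hN x).1 hx).1).2
  have hcN : c ∈ nbhd K L C' c := (hN c).2 ⟨hcR, by omega, by omega⟩
  constructor
  · -- if c wins the neighborhood, c wins C'
    intro h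
    have hcv : c ∈ v := (hvmem c).2 (hC' hc)
    have hcCv : c ∈ restrictList C' v := mem_restrict.2 ⟨hcv, hc⟩
    have hne : restrictList C' v ≠ [] := fun hnil => by rw [hnil] at hcCv; simp at hcCv
    set t := (restrictList C' v).head hne with hthead
    have ht : (restrictList C' v).head? = some t := List.head?_eq_head hne
    have htmem : t ∈ restrictList C' v := by
      rw [hthead]; exact List.head_mem hne
    by_cases htc : t = c
    · rw [htc] at ht; exact ht
    exfalso
    have htC' : t ∈ C' := (mem_restrict.1 htmem).2
    have htv : Prefers v t c := head_restrict_prefers hvnd ht hcCv htc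
    have htop : ∀ x, x ∈ nbhd K L C' c → x ≠ c → Prefers v c x := by
      intro x hxN hxc
      exact head_restrict_prefers hvnd h
        (mem_restrict.2 ⟨(hvmem x).2 (hC' (hNsub x hxN)), hxN⟩) (Ne.symm hxc)
    by_cases htN : t ∈ nbhd K L C' c
    · have := htop t htN htc
      unfold Prefers at this htv; omega
    · have hdR : t ∈ R := mem_restrict.2 ⟨(hLmem t).2 (hC' htC'), htC'⟩
      have hfar : R.idxOf t < R.idxOf c - K ∨ R.idxOf c + K < R.idxOf t := by
        by_contra hcon
        push_neg at hcon
        exact htN ((hN t).2 ⟨hdR, by omega, by omega⟩)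
      obtain ⟨S, hSlen, hSnd, hSprop⟩ := exists_between_window hRnd hcR hdR K hfar
      obtain ⟨P, hPlen, hPiff⟩ := withinSwaps_pairs k L L' hLnd hWS
      have hcd : c ≠ t := Ne.symm htc
      have hcS : c ∉ S := by
        intro hcs
        rcases (hSprop c hcs).2.2.2 with ⟨h1, _⟩ | ⟨_, h1⟩ <;> omega
      have hdS : t ∉ S := by
        intro hds
        rcases (hSprop t hds).2.2.2 with ⟨_, h1⟩ | ⟨h1, _⟩ <;> omega
      obtain ⟨z, hzS, hg1, hg2, hg3, hg4⟩ :=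
        exists_good c t hcd S hSnd hcS hdS P (by omega)
      obtain ⟨hzR, hb1, hb2, hbet⟩ := hSprop z hzS
      have hzN : z ∈ nbhd K L C' c := (hN z).2 ⟨hzR, hb1, hb2⟩
      have hzc : z ≠ c := by
        rintro rfl
        rcases hbet with ⟨h1, _⟩ | ⟨_, h1⟩ <;> omega
      have hzC : z ∈ C := hC' (mem_restrict.1 hzR).2
      have hcC : c ∈ C := hC' hc
      have htCC : t ∈ C := hC' htC'
      have hbetL : (Prefers L c z ∧ Prefers L z t) ∨ (Prefers L t z ∧ Prefers L z c) := by
        rcases hbet with ⟨h1, h2⟩ | ⟨h1, h2⟩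
        · exact Or.inl ⟨restrict_prefers hLnd hcR hzR h1, restrict_prefers hLnd hzR hdR h2⟩
        · exact Or.inr ⟨restrict_prefers hLnd hdR hzR h1, restrict_prefers hLnd hzR hcR h2⟩
      have hbetL' : (Prefers L' c z ∧ Prefers L' z t) ∨ (Prefers L' t z ∧ Prefers L' z c) := by
        rcases hbetL with ⟨h1, h2⟩ | ⟨h1, h2⟩
        · exact Or.inl ⟨(hPiff c z hg1 hg2).1 h1, (hPiff z t hg4 hg3).1 h2⟩
        · exact Or.inr ⟨(hPiff t z hg3 hg4).1 h1, (hPiff z c hg2 hg1).1 h2⟩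
      have hzv : z ∈ v := (hvmem z).2 hzC
      have htvmem : t ∈ v := (hvmem t).2 htCC
      have hvzc : Prefers v z c := by
        by_contra hcon
        have hzcne : v.idxOf z ≠ v.idxOf c :=
          fun he => hzc ((List.idxOf_inj hzv).1 he)
        have hvcz : Prefers v c z := by unfold Prefers at hcon ⊢; omega
        have hstep := hSP c z t ((hL'mem c).2 hcC) ((hL'mem z).2 hzC)
          ((hL'mem t).2 htCC) hbetL' hvcz
        unfold Prefers at hstep hvcz htv; omega
      have := htop z hzN hzc
      unfold Prefers at this hvzc; omega
  · intro h
    exact head_restrict_subset hNsub hcN h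
end

section
/- Let C be a finite candidate set, L a linear order on C, k a nonnegative integer, and v a linear-order vote on C that is within k adjacent swaps of some linear order single-peaked with respect to L. Then for every subset C' ⊆ C, the restriction of v to C' is within k adjacent swaps of some linear order on C' that is single-peaked with respect to the restriction of L to C'. -/
variable {α : Type*} [DecidableEq α]

lemma withinSwaps_succ {k : ℕ} {l l' : List α} (h : WithinSwaps k l l') :
    WithinSwaps (k + 1) l l' := by
  induction k generalizing l with
  | zero => exact Or.inl h
  | succ k ih =>
    rcases h with h | ⟨l'', hs, hw⟩
    · exact Or.inl h
    · exact Or.inr ⟨l'', hs, ih hw⟩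

lemma adjSwap_filter (p : α → Bool) {l l' : List α} (h : AdjSwap l l') :
    l.filter p = l'.filter p ∨ AdjSwap (l.filter p) (l'.filter p) := by
  obtain ⟨u, w, x, y, rfl, rfl⟩ := h
  by_cases hx : p x = true <;> by_cases hy : p y = true
  · right
    exact ⟨u.filter p, w.filter p, x, y, by simp [hx, hy], by simp [hx, hy]⟩
  all_goals left; simp [hx, hy]

lemma withinSwaps_filter (p : α → Bool) {k : ℕ} {l l' : List α}
    (h : WithinSwaps k l l') : WithinSwaps k (l.filter p) (l'.filter p) := by
  induction k generalizing l with
  | zero => exact congrArg _ h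
  | succ k ih =>
    rcases h with rfl | ⟨l'', hs, hw⟩
    · exact Or.inl rfl
    · rcases adjSwap_filter p hs with he | hsw
      · exact he ▸ withinSwaps_succ (ih hw)
      · exact Or.inr ⟨l''.filter p, hsw, ih hw⟩

lemma prefers_filter_iff (p : α → Bool) {a b : α} :
    ∀ {l : List α}, l.Nodup → a ∈ l.filter p → b ∈ l.filter p →
      (Prefers (l.filter p) a b ↔ Prefers l a b) := by
  intro l
  induction l with
  | nil => intro _ ha; simp at ha
  | cons x xs ih =>
    intro hnd ha hb
    obtain ⟨hx, hnd'⟩ := List.nodup_cons.mp hnd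
    by_cases hpx : p x = true
    · rw [List.filter_cons_of_pos hpx] at ha hb ⊢
      by_cases hax : a = x
      · subst hax
        by_cases hbx : b = a
        · subst hbx; simp [Prefers]
        · simp [Prefers, List.idxOf_cons_self, List.idxOf_cons_ne _ (Ne.symm hbx)]
      · by_cases hbx : b = x
        · subst hbx
          simp [Prefers, List.idxOf_cons_self, List.idxOf_cons_ne _ (Ne.symm hax)]
        · have ha' : a ∈ xs.filter p := by
            rcases List.mem_cons.mp ha with h | h; exact absurd h hax; exact h
          have hb' : b ∈ xs.filter p := by
            rcases List.mem_cons.mp hb with h | h; exact absurd h hbx; exact h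
          simp only [Prefers, List.idxOf_cons_ne _ (Ne.symm hax),
            List.idxOf_cons_ne _ (Ne.symm hbx)]
          simpa [Prefers, Nat.succ_lt_succ_iff] using ih hnd' ha' hb'
    · rw [List.filter_cons_of_neg hpx] at ha hb ⊢
      have hax : a ≠ x := fun h => hx (h ▸ List.mem_of_mem_filter ha)
      have hbx : b ≠ x := fun h => hx (h ▸ List.mem_of_mem_filter hb)
      simp only [Prefers, List.idxOf_cons_ne _ (Ne.symm hax),
        List.idxOf_cons_ne _ (Ne.symm hbx)]
      simpa [Prefers, Nat.succ_lt_succ_iff] using ih hnd' ha hb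

/-- Being within `k` adjacent swaps of a single-peaked order is preserved
under restriction to any subset `C'` of the candidates (restricting both the vote and
the societal axis). -/
theorem dodgsonSP_restriction
    (C : Finset α) (L v : List α) (k : ℕ)
    (hL : IsVoteOn C L) (hv : IsVoteOn C v)
    (h : ∃ v', IsVoteOn C v' ∧ SinglePeaked L v' ∧ WithinSwaps k v v') :
    ∀ C' ⊆ C, ∃ w, IsVoteOn C' w ∧ SinglePeaked (restrictList C' L) w ∧
      WithinSwaps k (restrictList C' v) w := by
  obtain ⟨v', hv', hSP, hW⟩ := h
  intro C' hC'
  set p : α → Bool := fun a => decide (a ∈ C') with hp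
  refine ⟨restrictList C' v', ?_, ?_, withinSwaps_filter p hW⟩
  · constructor
    · exact hv'.1.filter p
    · intro a
      simp only [restrictList, List.mem_filter, hv'.2, decide_eq_true_eq]
      exact ⟨fun h => h.2, fun h => ⟨hC' h, h⟩⟩
  · intro c1 c2 c3 h1 h2 h3 haxis hpref
    have memL : ∀ c, c ∈ restrictList C' L → c ∈ L ∧ c ∈ C' := by
      intro c hc
      simpa [restrictList, List.mem_filter] using hc
    obtain ⟨h1L, h1C⟩ := memL _ h1
    obtain ⟨h2L, h2C⟩ := memL _ h2
    obtain ⟨h3L, h3C⟩ := memL _ h3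
    have memv' : ∀ c, c ∈ L → c ∈ C' → c ∈ restrictList C' v' := by
      intro c hcL hcC
      simp [restrictList, List.mem_filter, (hv'.2 c).mpr ((hL.2 c).mp hcL), hcC]
    have h1v := memv' _ h1L h1C
    have h2v := memv' _ h2L h2C
    have h3v := memv' _ h3L h3C
    have haxis' : (Prefers L c1 c2 ∧ Prefers L c2 c3) ∨
        (Prefers L c3 c2 ∧ Prefers L c2 c1) := by
      rcases haxis with ⟨ha, hb⟩ | ⟨ha, hb⟩
      · exact Or.inl ⟨(prefers_filter_iff p hL.1 h1 h2).mp ha,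
          (prefers_filter_iff p hL.1 h2 h3).mp hb⟩
      · exact Or.inr ⟨(prefers_filter_iff p hL.1 h3 h2).mp ha,
          (prefers_filter_iff p hL.1 h2 h1).mp hb⟩
    have hpref' := (prefers_filter_iff p hv'.1 h1v h2v).mp hpref
    exact (prefers_filter_iff p hv'.1 h2v h3v).mpr
      (hSP c1 c2 c3 h1L h2L h3L haxis' hpref')
end

section
/- Let C = {c_1, ..., c_m} be a finite candidate set with m ≥ 2 and let L be a linear order on C with c_1 L c_2 L ... L c_m. For every two distinct candidates c_i, c_j ∈ C there exist a linear order L' on C that is within m − 2 adjacent swaps of L and a linear-order vote v on C that ranks c_i first and c_j second and that is single-peaked with respect to L'. Moreover, if i ≠ 1 and j ≠ 1, then v can additionally be chosen to rank c_1 last. -/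
variable {α : Type*} [DecidableEq α]

set_option linter.unusedSectionVars false

lemma withinSwaps_perm : ∀ {k : ℕ} {l l' : List α}, WithinSwaps k l l' → l.Perm l'
  | 0, l, l', h => by rw [show l = l' from h]
  | (k+1), l, l', h => by
    rcases h with rfl | ⟨l'', hs, hw⟩
    · exact List.Perm.refl _
    · exact (adjSwap_perm hs).trans (withinSwaps_perm hw)

lemma withinSwaps_mono {k k' : ℕ} {l l' : List α} (hk : k ≤ k') (h : WithinSwaps k l l') :
    WithinSwaps k' l l' := by
  induction k' generalizing k l with
  | zero => obtain rfl : k = 0 := Nat.le_zero.mp hk; exact h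
  | succ n ih =>
    cases k with
    | zero => exact Or.inl h
    | succ m =>
      rcases h with rfl | ⟨l'', hs, hw⟩
      · exact Or.inl rfl
      · exact Or.inr ⟨l'', hs, ih (Nat.le_of_succ_le_succ hk) hw⟩

lemma moveLeft : ∀ (M P Q : List α) (x y : α),
    WithinSwaps M.length (P ++ x :: (M ++ y :: Q)) (P ++ x :: y :: (M ++ Q)) := by
  intro M
  induction M using List.reverseRecOn with
  | nil => intro P Q x y; rfl
  | append_singleton M' q ih =>
    intro P Q x y
    rw [List.length_append, List.length_singleton]
    refine Or.inr ⟨P ++ x :: M' ++ y :: q :: Q, ⟨P ++ x :: M', Q, q, y, by simp, by simp⟩, ?_⟩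
    have h := ih P (q :: Q) x y
    have e1 : P ++ x :: M' ++ y :: q :: Q = P ++ x :: (M' ++ y :: q :: Q) := by simp
    have e2 : P ++ x :: y :: (M' ++ q :: Q) = P ++ x :: y :: (M' ++ [q] ++ Q) := by simp
    rw [e1, ← e2]
    exact h

lemma moveRight : ∀ (M P Q : List α) (x y : α),
    WithinSwaps M.length (P ++ y :: (M ++ x :: Q)) ((P ++ M) ++ y :: x :: Q) := by
  intro M
  induction M with
  | nil => intro P Q x y; show _ = _; simp
  | cons q M' ih =>
    intro P Q x y
    refine Or.inr ⟨P ++ q :: y :: (M' ++ x :: Q), ⟨P, M' ++ x :: Q, y, q, by simp, by simp⟩, ?_⟩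
    have h := ih (P ++ [q]) Q x y
    have e1 : P ++ [q] ++ y :: (M' ++ x :: Q) = P ++ q :: y :: (M' ++ x :: Q) := by simp
    have e2 : P ++ [q] ++ M' = P ++ q :: M' := by simp
    rw [e1, e2] at h
    exact h

lemma idxOf_reverse {l : List α} {x : α} (hnd : l.Nodup) (hx : x ∈ l) :
    l.reverse.idxOf x = l.length - 1 - l.idxOf x := by
  induction l with
  | nil => simp at hx
  | cons a t ih =>
    rw [List.nodup_cons] at hnd
    by_cases hxa : x = a
    · subst hxa
      rw [List.reverse_cons, List.idxOf_append_of_notMem (by simpa using hnd.1)]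
      simp
    · have hxt : x ∈ t := by
        rcases List.mem_cons.mp hx with h | h
        · exact absurd h hxa
        · exact h
      rw [List.reverse_cons, List.idxOf_append_of_mem (by simpa using hxt),
        List.idxOf_cons_ne _ (Ne.symm hxa), ih hnd.2 hxt]
      have := List.idxOf_lt_length_iff.mpr hxt
      simp only [List.length_cons]
      omega

lemma sp_of_valley (L v : List α) (p : ℕ)
    (h : ∀ x y, x ∈ L → y ∈ L → L.idxOf x < L.idxOf y →
      (L.idxOf y ≤ p → v.idxOf y < v.idxOf x) ∧
      (p ≤ L.idxOf x → v.idxOf x < v.idxOf y)) :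
    SinglePeaked L v := by
  intro c1 c2 c3 h1 h2 h3 hb hp
  rcases hb with ⟨hb1, hb2⟩ | ⟨hb1, hb2⟩
  · by_cases hc : L.idxOf c2 ≤ p
    · exact absurd ((h c1 c2 h1 h2 hb1).1 hc) (Nat.not_lt.mpr (Nat.le_of_lt hp))
    · exact (h c2 c3 h2 h3 hb2).2 (Nat.le_of_lt (Nat.not_le.mp hc))
  · by_cases hc : p ≤ L.idxOf c2
    · exact absurd ((h c2 c1 h2 h1 hb2).2 hc) (Nat.not_lt.mpr (Nat.le_of_lt hp))
    · exact (h c3 c2 h3 h2 hb1).1 (Nat.le_of_lt (Nat.not_le.mp hc))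

lemma sp_build (S R : List α) (x y m1 m2 : α)
    (hnd : (S ++ m1 :: m2 :: R).Nodup)
    (hc : (m1 = x ∧ m2 = y) ∨ (m1 = y ∧ m2 = x)) :
    SinglePeaked (S ++ m1 :: m2 :: R) (x :: y :: (R ++ S.reverse)) := by
  rw [List.nodup_append'] at hnd
  obtain ⟨hS, hM, hdisj⟩ := hnd
  obtain ⟨hm1cons, hM2⟩ := List.nodup_cons.mp hM
  have hm12 : m1 ≠ m2 := fun h => hm1cons (by rw [h]; exact List.mem_cons_self)
  have hm1R : m1 ∉ R := fun h => hm1cons (List.mem_cons_of_mem _ h)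
  have hm2R : m2 ∉ R := (List.nodup_cons.mp hM2).1
  have hm1S : m1 ∉ S := fun h => hdisj h (List.mem_cons_self)
  have hm2S : m2 ∉ S := fun h => hdisj h (List.mem_cons_of_mem _ (List.mem_cons_self))
  have hSR : ∀ z ∈ S, z ∉ R := fun z hz hzR =>
    hdisj hz (List.mem_cons_of_mem _ (List.mem_cons_of_mem _ hzR))
  have hSm1 : ∀ z ∈ S, z ≠ m1 := fun z hz h => hm1S (h ▸ hz)
  have hSm2 : ∀ z ∈ S, z ≠ m2 := fun z hz h => hm2S (h ▸ hz)
  have hxy : x ≠ y := by rcases hc with ⟨rfl, rfl⟩ | ⟨rfl, rfl⟩; exact hm12; exact hm12.symm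
  have hxR : x ∉ R := by rcases hc with ⟨rfl, rfl⟩ | ⟨rfl, rfl⟩; exact hm1R; exact hm2R
  have hyR : y ∉ R := by rcases hc with ⟨rfl, rfl⟩ | ⟨rfl, rfl⟩; exact hm2R; exact hm1R
  have hxS : x ∉ S := by rcases hc with ⟨rfl, rfl⟩ | ⟨rfl, rfl⟩; exact hm1S; exact hm2S
  have hyS : y ∉ S := by rcases hc with ⟨rfl, rfl⟩ | ⟨rfl, rfl⟩; exact hm2S; exact hm1S
  -- vote index computations
  have pvx : (x :: y :: (R ++ S.reverse)).idxOf x = 0 := List.idxOf_cons_self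
  have pvy : (x :: y :: (R ++ S.reverse)).idxOf y = 1 := by
    rw [List.idxOf_cons_ne _ hxy, List.idxOf_cons_self]
  have pvR : ∀ z ∈ R, (x :: y :: (R ++ S.reverse)).idxOf z = 2 + R.idxOf z := by
    intro z hz
    rw [List.idxOf_cons_ne _ (fun h => hxR (by rw [h]; exact hz)),
        List.idxOf_cons_ne _ (fun h => hyR (by rw [h]; exact hz)),
        List.idxOf_append_of_mem hz]
    omega
  have pvS : ∀ z ∈ S,
      (x :: y :: (R ++ S.reverse)).idxOf z
        = 2 + R.length + (S.length - 1 - S.idxOf z) := by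
    intro z hz
    rw [List.idxOf_cons_ne _ (fun h => hxS (by rw [h]; exact hz)),
        List.idxOf_cons_ne _ (fun h => hyS (by rw [h]; exact hz)),
        List.idxOf_append_of_notMem (hSR z hz), idxOf_reverse hS hz]
    omega
  -- axis index computations
  have pLS : ∀ z ∈ S, (S ++ m1 :: m2 :: R).idxOf z = S.idxOf z :=
    fun z hz => List.idxOf_append_of_mem hz
  have pLm1 : (S ++ m1 :: m2 :: R).idxOf m1 = S.length := by
    rw [List.idxOf_append_of_notMem hm1S, List.idxOf_cons_self]
    omega
  have pLm2 : (S ++ m1 :: m2 :: R).idxOf m2 = S.length + 1 := by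
    rw [List.idxOf_append_of_notMem hm2S, List.idxOf_cons_ne _ hm12,
      List.idxOf_cons_self]
  have pLR : ∀ z ∈ R, (S ++ m1 :: m2 :: R).idxOf z = S.length + 2 + R.idxOf z := by
    intro z hz
    rw [List.idxOf_append_of_notMem (fun h => hSR z h hz),
      List.idxOf_cons_ne _ (fun h => hm1R (by rw [h]; exact hz)),
      List.idxOf_cons_ne _ (fun h => hm2R (by rw [h]; exact hz))]
    omega
  have key : ∀ u ∈ S ++ m1 :: m2 :: R,
      ((S ++ m1 :: m2 :: R).idxOf u = S.idxOf u ∧ S.idxOf u < S.length ∧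
        (x :: y :: (R ++ S.reverse)).idxOf u
          = 2 + R.length + (S.length - 1 - S.idxOf u)) ∨
      ((S ++ m1 :: m2 :: R).idxOf u = S.length ∧
        (x :: y :: (R ++ S.reverse)).idxOf u = (x :: y :: (R ++ S.reverse)).idxOf m1) ∨
      ((S ++ m1 :: m2 :: R).idxOf u = S.length + 1 ∧
        (x :: y :: (R ++ S.reverse)).idxOf u = (x :: y :: (R ++ S.reverse)).idxOf m2) ∨
      ((S ++ m1 :: m2 :: R).idxOf u = S.length + 2 + R.idxOf u ∧
        (x :: y :: (R ++ S.reverse)).idxOf u = 2 + R.idxOf u) := by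
    intro u hu
    rcases List.mem_append.mp hu with hu | hu
    · exact Or.inl ⟨pLS u hu, List.idxOf_lt_length_iff.mpr hu, pvS u hu⟩
    · rcases List.mem_cons.mp hu with rfl | hu
      · exact Or.inr (Or.inl ⟨pLm1, rfl⟩)
      · rcases List.mem_cons.mp hu with rfl | hu
        · exact Or.inr (Or.inr (Or.inl ⟨pLm2, rfl⟩))
        · exact Or.inr (Or.inr (Or.inr ⟨pLR u hu, pvR u hu⟩))
  have hm : ((x :: y :: (R ++ S.reverse)).idxOf m1 = 0 ∧
      (x :: y :: (R ++ S.reverse)).idxOf m2 = 1) ∨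
      ((x :: y :: (R ++ S.reverse)).idxOf m1 = 1 ∧
      (x :: y :: (R ++ S.reverse)).idxOf m2 = 0) := by
    rcases hc with ⟨rfl, rfl⟩ | ⟨rfl, rfl⟩
    · exact Or.inl ⟨pvx, pvy⟩
    · exact Or.inr ⟨pvy, pvx⟩
  rcases hm with ⟨h1, h2⟩ | ⟨h1, h2⟩
  · apply sp_of_valley _ _ S.length
    intro z w hz hw hlt
    rcases key z hz with h | h | h | h <;> rcases key w hw with h' | h' | h' | h' <;> omega
  · apply sp_of_valley _ _ (S.length + 1)
    intro z w hz hw hlt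
    rcases key z hz with h | h | h | h <;> rcases key w hw with h' | h' | h' | h' <;> omega

lemma perm_build (S R : List α) (x y m1 m2 : α)
    (hc : (m1 = x ∧ m2 = y) ∨ (m1 = y ∧ m2 = x)) :
    (S ++ m1 :: m2 :: R).Perm (x :: y :: (R ++ S.reverse)) := by
  have h1 : (S ++ m1 :: m2 :: R).Perm (m1 :: m2 :: (S ++ R)) :=
    List.perm_middle.trans (List.Perm.cons m1 List.perm_middle)
  have h2 : (S ++ R).Perm (R ++ S.reverse) :=
    List.perm_append_comm.trans (List.Perm.append_left R S.reverse_perm.symm)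
  rcases hc with ⟨rfl, rfl⟩ | ⟨rfl, rfl⟩
  · exact h1.trans ((h2.cons m2).cons m1)
  · exact h1.trans ((List.Perm.swap m2 m1 (S ++ R)).trans ((h2.cons m1).cons m2))

lemma last_build (x y c1 : α) (R S' : List α) :
    (x :: y :: (R ++ (c1 :: S').reverse)).getLast? = some c1 := by
  have h : x :: y :: (R ++ (c1 :: S').reverse) = (x :: y :: (R ++ S'.reverse)) ++ [c1] := by
    simp
  rw [h, List.getLast?_concat]

/-- For every two distinct candidates `ci, cj` there are an axis `L'`
within `m - 2` adjacent swaps of `L` and a vote ranking `ci` first and `cj` second that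
is single-peaked w.r.t. `L'`; moreover, if neither `ci` nor `cj` is the `L`-minimum
candidate `c1`, then the vote can additionally be chosen to rank `c1` last. -/
theorem perceptionFlip_any_top_two
    (C : Finset α) (hC : 2 ≤ C.card) (L : List α) (hL : IsVoteOn C L)
    (ci cj : α) (hci : ci ∈ C) (hcj : cj ∈ C) (hne : ci ≠ cj) :
    (∃ L' v, IsVoteOn C L' ∧ WithinSwaps (C.card - 2) L L' ∧
        IsVoteOn C v ∧ SinglePeaked L' v ∧
        v.head? = some ci ∧ v.tail.head? = some cj) ∧
    (∀ c1, L.head? = some c1 → ci ≠ c1 → cj ≠ c1 →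
      ∃ L' v, IsVoteOn C L' ∧ WithinSwaps (C.card - 2) L L' ∧
        IsVoteOn C v ∧ SinglePeaked L' v ∧
        v.head? = some ci ∧ v.tail.head? = some cj ∧ v.getLast? = some c1) := by
  have hcard : C.card = L.length := by
    have hT : L.toFinset = C := by
      ext a; simp only [List.mem_toFinset]; exact hL.2 a
    rw [← hT, List.toFinset_card_of_nodup hL.1]
  suffices h : ∃ L' v, IsVoteOn C L' ∧ WithinSwaps (C.card - 2) L L' ∧ IsVoteOn C v ∧
      SinglePeaked L' v ∧ v.head? = some ci ∧ v.tail.head? = some cj ∧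
      (∀ c1, L.head? = some c1 → ci ≠ c1 → cj ≠ c1 → v.getLast? = some c1) by
    obtain ⟨L', v, h1, h2, h3, h4, h5, h6, h7⟩ := h
    exact ⟨⟨L', v, h1, h2, h3, h4, h5, h6⟩,
      fun c1 hc1 hi hj => ⟨L', v, h1, h2, h3, h4, h5, h6, h7 c1 hc1 hi hj⟩⟩
  have hciL : ci ∈ L := (hL.2 ci).mpr hci
  have hcjL : cj ∈ L := (hL.2 cj).mpr hcj
  obtain ⟨P, T, rfl⟩ := List.append_of_mem hciL
  rcases List.mem_append.mp hcjL with hcjP | hcjT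
  · -- cj appears before ci in L
    obtain ⟨P1, P2, rfl⟩ := List.append_of_mem hcjP
    have heq : (P1 ++ cj :: P2) ++ ci :: T = P1 ++ cj :: (P2 ++ ci :: T) := by simp
    have hlen : P2.length ≤ C.card - 2 := by
      rw [hcard]; simp only [List.length_append, List.length_cons]; omega
    have hsw : WithinSwaps (C.card - 2) ((P1 ++ cj :: P2) ++ ci :: T)
        ((P1 ++ P2) ++ cj :: ci :: T) := by
      rw [heq]
      exact withinSwaps_mono hlen (moveRight P2 P1 T ci cj)
    have hpermL : ((P1 ++ cj :: P2) ++ ci :: T).Perm ((P1 ++ P2) ++ cj :: ci :: T) :=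
      withinSwaps_perm hsw
    have hIsL' : IsVoteOn C ((P1 ++ P2) ++ cj :: ci :: T) :=
      ⟨hpermL.nodup_iff.mp hL.1, fun a => (hpermL.mem_iff).symm.trans (hL.2 a)⟩
    have hpermv : ((P1 ++ P2) ++ cj :: ci :: T).Perm
        (ci :: cj :: (T ++ (P1 ++ P2).reverse)) :=
      perm_build (P1 ++ P2) T ci cj cj ci (Or.inr ⟨rfl, rfl⟩)
    have hIsv : IsVoteOn C (ci :: cj :: (T ++ (P1 ++ P2).reverse)) :=
      ⟨(hpermL.trans hpermv).nodup_iff.mp hL.1,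
        fun a => ((hpermL.trans hpermv).mem_iff).symm.trans (hL.2 a)⟩
    refine ⟨(P1 ++ P2) ++ cj :: ci :: T, ci :: cj :: (T ++ (P1 ++ P2).reverse),
      hIsL', hsw, hIsv,
      sp_build (P1 ++ P2) T ci cj cj ci hIsL'.1 (Or.inr ⟨rfl, rfl⟩), rfl, rfl, ?_⟩
    intro c1 hc1 hi hj
    cases P1 with
    | nil => exact absurd (by simpa using hc1) hj
    | cons p P1' =>
      have hp : p = c1 := by simpa using hc1
      subst hp
      rw [List.cons_append]
      exact last_build ci cj p T (P1' ++ P2)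
  · -- ci appears before cj in L
    have hcjT' : cj ∈ T := by
      rcases List.mem_cons.mp hcjT with h | h
      · exact absurd h.symm hne
      · exact h
    obtain ⟨M, Q, rfl⟩ := List.append_of_mem hcjT'
    have hlen : M.length ≤ C.card - 2 := by
      rw [hcard]; simp only [List.length_append, List.length_cons]; omega
    have hsw : WithinSwaps (C.card - 2) (P ++ ci :: (M ++ cj :: Q))
        (P ++ ci :: cj :: (M ++ Q)) := withinSwaps_mono hlen (moveLeft M P Q ci cj)
    have hpermL : (P ++ ci :: (M ++ cj :: Q)).Perm (P ++ ci :: cj :: (M ++ Q)) :=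
      withinSwaps_perm hsw
    have hIsL' : IsVoteOn C (P ++ ci :: cj :: (M ++ Q)) :=
      ⟨hpermL.nodup_iff.mp hL.1, fun a => (hpermL.mem_iff).symm.trans (hL.2 a)⟩
    have hpermv : (P ++ ci :: cj :: (M ++ Q)).Perm
        (ci :: cj :: ((M ++ Q) ++ P.reverse)) :=
      perm_build P (M ++ Q) ci cj ci cj (Or.inl ⟨rfl, rfl⟩)
    have hIsv : IsVoteOn C (ci :: cj :: ((M ++ Q) ++ P.reverse)) :=
      ⟨(hpermL.trans hpermv).nodup_iff.mp hL.1,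
        fun a => ((hpermL.trans hpermv).mem_iff).symm.trans (hL.2 a)⟩
    refine ⟨P ++ ci :: cj :: (M ++ Q), ci :: cj :: ((M ++ Q) ++ P.reverse),
      hIsL', hsw, hIsv,
      sp_build P (M ++ Q) ci cj ci cj hIsL'.1 (Or.inl ⟨rfl, rfl⟩), rfl, rfl, ?_⟩
    intro c1 hc1 hi hj
    cases P with
    | nil => exact absurd (by simpa using hc1) hi
    | cons p P' =>
      have hp : p = c1 := by simpa using hc1
      subst hp
      exact last_build ci cj p (M ++ Q) P'
end

section
/- Let k ≥ 0, let C be a finite candidate set with |C| ≥ k + 3, let L be a linear order on C, and let V be a finite collection of linear-order votes on C such that all but at most k of the votes are single-peaked with respect to L. Then there exists a candidate c ∈ C that is ranked last by no vote in V. -/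
variable {α : Type*} [DecidableEq α]

lemma veto_endpoint_aux (C : Finset α) (L v : List α) (hL : IsVoteOn C L)
    (hv : IsVoteOn C v) (hvne : v ≠ []) (hLne : L ≠ []) (hsp : SinglePeaked L v) :
    v.getLast hvne = L.head hLne ∨ v.getLast hvne = L.getLast hLne := by
  set x := v.getLast hvne with hx
  by_contra hcon
  push_neg at hcon
  obtain ⟨h1, h2⟩ := hcon
  have hxv : x ∈ v := List.getLast_mem hvne
  have hxL : x ∈ L := (hL.2 x).2 ((hv.2 x).1 hxv)
  set p := L.idxOf x with hp
  have hplen : p < L.length := List.idxOf_lt_length_iff.2 hxL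
  have hgetp : L[p]'hplen = x := List.idxOf_get hplen
  have hLpos : 0 < L.length := List.length_pos_iff.2 hLne
  have hppos : 0 < p := by
    rcases Nat.eq_zero_or_pos p with h | h
    · exfalso; apply h1
      rw [List.head_eq_getElem_zero hLne, ← hgetp]; simp [h]
    · exact h
  have hplt : p < L.length - 1 := by
    rcases lt_or_ge p (L.length - 1) with h | h
    · exact h
    · exfalso; apply h2
      rw [List.getLast_eq_getElem, ← hgetp]
      congr 1; omega
  set a := L[p-1]'(by omega) with ha
  set b := L[p+1]'(by omega) with hb
  have haL : a ∈ L := List.getElem_mem _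
  have hbL : b ∈ L := List.getElem_mem _
  have hia : L.idxOf a = p - 1 := List.Nodup.idxOf_getElem hL.1 _ _
  have hib : L.idxOf b = p + 1 := List.Nodup.idxOf_getElem hL.1 _ _
  have hav : a ∈ v := (hv.2 a).2 ((hL.2 a).1 haL)
  have hbv : b ∈ v := (hv.2 b).2 ((hL.2 b).1 hbL)
  have hvlen : 0 < v.length := List.length_pos_iff.2 hvne
  have hix : v.idxOf x = v.length - 1 := by
    rw [hx, List.getLast_eq_getElem, List.Nodup.idxOf_getElem hv.1]
  have hialt : v.idxOf a < v.length := List.idxOf_lt_length_iff.2 hav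
  have hiblt : v.idxOf b < v.length := List.idxOf_lt_length_iff.2 hbv
  have hax : a ≠ x := by intro h; rw [h, ← hp] at hia; omega
  have hbx : b ≠ x := by intro h; rw [h, ← hp] at hib; omega
  have hiane : v.idxOf a ≠ v.length - 1 := by
    intro h; apply hax
    have := List.idxOf_get (a := a) (l := v) hialt
    rw [hx, List.getLast_eq_getElem]
    rw [← this]; simp [h]
  have hibne : v.idxOf b ≠ v.length - 1 := by
    intro h; apply hbx
    have := List.idxOf_get (a := b) (l := v) hiblt
    rw [hx, List.getLast_eq_getElem]
    rw [← this]; simp [h]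
  have hpav : Prefers v a x := by unfold Prefers; omega
  have hpbv : Prefers v b x := by unfold Prefers; omega
  have := hsp a x b haL hxL hbL (Or.inl ⟨by unfold Prefers; omega, by unfold Prefers; omega⟩) hpav
  unfold Prefers at this hpbv
  omega

/-- If `|C| ≥ k + 3` and all but at most `k` of the votes are
single-peaked w.r.t. `L`, then some candidate is ranked last (vetoed) by no vote. -/
theorem kMaverick_veto_unvetoed_candidate
    (k : ℕ) (C : Finset α) (hC : k + 3 ≤ C.card)
    (L : List α) (hL : IsVoteOn C L)
    {I : Type*} [Fintype I] (V : I → List α)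
    (hvotes : ∀ i, IsVoteOn C (V i))
    (hmav : ∃ S : Finset I, S.card ≤ k ∧ ∀ i ∉ S, SinglePeaked L (V i)) :
    ∃ c ∈ C, ∀ i, (V i).getLast? ≠ some c := by
  classical
  obtain ⟨S, hScard, hSP⟩ := hmav
  have hCne : C.Nonempty := Finset.card_pos.1 (by omega)
  have hLne : L ≠ [] := by
    obtain ⟨c, hc⟩ := hCne
    intro h; have := (hL.2 c).2 hc; simp [h] at this
  have hVne : ∀ i, V i ≠ [] := fun i => by
    obtain ⟨c, hc⟩ := hCne
    intro h; have := ((hvotes i).2 c).2 hc; simp [h] at this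
  set T : Finset α := C.filter (fun c => ∃ i, (V i).getLast? = some c) with hT
  have hsub : T ⊆ insert (L.head hLne)
      (insert (L.getLast hLne) (S.image (fun i => (V i).getLast (hVne i)))) := by
    intro c hc
    rw [hT, Finset.mem_filter] at hc
    obtain ⟨hcC, i, hi⟩ := hc
    have hc' : (V i).getLast (hVne i) = c := by
      rw [List.getLast?_eq_getLast (hVne i)] at hi
      exact Option.some.inj hi
    by_cases hiS : i ∈ S
    · simp only [Finset.mem_insert, Finset.mem_image]
      exact Or.inr (Or.inr ⟨i, hiS, hc'⟩)
    · rcases veto_endpoint_aux C L (V i) hL (hvotes i) (hVne i) hLne (hSP i hiS) with h | h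
      · simp [← hc', h]
      · simp [← hc', h]
  have hcard : T.card < C.card := by
    have h1 := Finset.card_le_card hsub
    have h2 := Finset.card_insert_le (L.head hLne)
      (insert (L.getLast hLne) (S.image (fun i => (V i).getLast (hVne i))))
    have h3 := Finset.card_insert_le (L.getLast hLne)
      (S.image (fun i => (V i).getLast (hVne i)))
    have h4 : (S.image (fun i => (V i).getLast (hVne i))).card ≤ S.card :=
      Finset.card_image_le
    omega
  have hss : T ⊂ C :=
    lt_of_le_of_ne (Finset.filter_subset _ _) (by
      intro h; exact (lt_irrefl C.card) (lt_of_eq_of_lt (congrArg Finset.card h).symm hcard))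
  obtain ⟨c, hcC, hcT⟩ := Finset.exists_of_ssubset hss
  refine ⟨c, hcC, fun i hi => hcT ?_⟩
  rw [hT, Finset.mem_filter]
  exact ⟨hcC, i, hi⟩
end

section
/- Let C be a finite candidate set, L a linear order on C, and c ∈ C a candidate such that at least two candidates are strictly below c in L and at least two candidates are strictly above c in L. Then no linear-order vote on C that is swoon-SP with respect to L ranks c last. -/
variable {α : Type*} [DecidableEq α]

theorem prefers_filter (p : α → Bool) : ∀ (l : List α) (a b : α),
    p a = true → p b = true → Prefers l a b → Prefers (l.filter p) a b := by
  intro l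
  induction l with
  | nil => intro a b _ _ h; exact absurd h (by simp [Prefers])
  | cons x xs ih =>
    intro a b hpa hpb h
    unfold Prefers at h ⊢
    by_cases hax : a = x
    · subst hax
      have hab : a ≠ b := by
        intro hh; subst hh; exact lt_irrefl _ h
      rw [List.filter_cons_of_pos hpa, List.idxOf_cons_self,
        List.idxOf_cons_ne _ hab]
      exact Nat.succ_pos _
    · have hbx : b ≠ x := by
        intro hh; subst hh
        simp [List.idxOf_cons, hax] at h
      rw [List.idxOf_cons_ne _ (Ne.symm hax), List.idxOf_cons_ne _ (Ne.symm hbx)] at h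
      have h' : xs.idxOf a < xs.idxOf b := Nat.lt_of_succ_lt_succ h
      have := ih a b hpa hpb h'
      by_cases hpx : p x = true
      · rw [List.filter_cons_of_pos hpx, List.idxOf_cons_ne _ (Ne.symm hax),
          List.idxOf_cons_ne _ (Ne.symm hbx)]
        exact Nat.succ_lt_succ this
      · rw [List.filter_cons_of_neg (by simpa using hpx)]
        exact this

theorem prefers_getLast (l : List α) (c a : α) (hnd : l.Nodup)
    (hl : l.getLast? = some c) (ha : a ∈ l) (hac : a ≠ c) : Prefers l a c := by
  obtain ⟨l', rfl⟩ := List.getLast?_eq_some_iff.mp hl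
  have hcl' : c ∉ l' := by
    have := List.disjoint_of_nodup_append hnd
    intro hc; exact this hc (by simp)
  have hal' : a ∈ l' := by
    rcases List.mem_append.mp ha with h | h
    · exact h
    · simp at h; exact absurd h hac
  unfold Prefers
  rw [List.idxOf_append_of_mem hal', List.idxOf_append_of_notMem hcl']
  have := List.idxOf_lt_length_iff.mpr hal'
  simp
  omega

theorem getLast?_filter (p : α → Bool) (l : List α) (c : α)
    (hl : l.getLast? = some c) (hpc : p c = true) :
    (l.filter p).getLast? = some c := by
  obtain ⟨l', rfl⟩ := List.getLast?_eq_some_iff.mp hl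
  rw [List.filter_append, List.filter_cons_of_pos hpc, List.filter_nil]
  exact List.getLast?_concat

/-- If at least two candidates lie strictly below `c` in the axis `L` and
at least two lie strictly above, then no swoon-SP vote ranks `c` last. -/
theorem swoonSP_interior_never_vetoed
    (C : Finset α) (L : List α) (hL : IsVoteOn C L) (c : α) (hc : c ∈ C)
    (hbelow : ∃ a ∈ C, ∃ b ∈ C, a ≠ b ∧ Prefers L a c ∧ Prefers L b c)
    (habove : ∃ a ∈ C, ∃ b ∈ C, a ≠ b ∧ Prefers L c a ∧ Prefers L c b)
    (v : List α) (hv : IsVoteOn C v) (hsw : SwoonSP C L v) :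
    v.getLast? ≠ some c := by
  intro hlast
  -- pick below/above candidates
  obtain ⟨a1, ha1C, a2, ha2C, ha12, ha1, ha2⟩ := hbelow
  obtain ⟨b1, hb1C, b2, hb2C, hb12, hb1, hb2⟩ := habove
  have hcv : c ∈ v := (hv.2 c).mpr hc
  have hvne : v ≠ [] := List.ne_nil_of_mem hcv
  obtain ⟨t, ht⟩ : ∃ t, v.head? = some t := by
    cases v with
    | nil => exact absurd rfl hvne
    | cons x xs => exact ⟨x, rfl⟩
  have ha1c : a1 ≠ c := fun h => by subst h; exact lt_irrefl _ ha1
  have ha1v : a1 ∈ v := (hv.2 a1).mpr ha1C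
  -- c ≠ t
  have hct : c ≠ t := by
    intro h; subst h
    cases v with
    | nil => exact absurd rfl hvne
    | cons x xs =>
      simp at ht; subst ht
      have hxs : xs ≠ [] := by
        intro h; subst h
        simp at ha1v; exact ha1c ha1v
      rw [show (x :: xs).getLast? = xs.getLast? by
        cases xs with
        | nil => exact absurd rfl hxs
        | cons y ys => simp [List.getLast?_cons_cons]] at hlast
      have hxin : x ∈ xs := by
        obtain ⟨ys, hys⟩ := List.getLast?_eq_some_iff.mp hlast
        rw [hys]; simp
      have := hv.1
      simp at this
      exact this.1 hxin
  -- choose a below candidate ≠ t and above candidate ≠ t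
  obtain ⟨a, haC, hat, haL⟩ : ∃ a, a ∈ C ∧ a ≠ t ∧ Prefers L a c := by
    by_cases h : a1 = t
    · exact ⟨a2, ha2C, by rw [← h]; exact ha12.symm, ha2⟩
    · exact ⟨a1, ha1C, h, ha1⟩
  obtain ⟨b, hbC, hbt, hbL⟩ : ∃ b, b ∈ C ∧ b ≠ t ∧ Prefers L c b := by
    by_cases h : b1 = t
    · exact ⟨b2, hb2C, by rw [← h]; exact hb12.symm, hb2⟩
    · exact ⟨b1, hb1C, h, hb1⟩
  have hsp := hsw t ht
  set C' := C.erase t with hC'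
  set L' := restrictList C' L with hL'
  set v' := restrictList C' v with hv'
  have hmemC' : ∀ x, x ∈ C → x ≠ t → x ∈ C' := fun x hx hxt => Finset.mem_erase.mpr ⟨hxt, hx⟩
  have haC' := hmemC' a haC hat
  have hbC' := hmemC' b hbC hbt
  have hcC' := hmemC' c hc hct
  have haLmem : a ∈ L := (hL.2 a).mpr haC
  have hbLmem : b ∈ L := (hL.2 b).mpr hbC
  have hcLmem : c ∈ L := (hL.2 c).mpr hc
  have haL' : a ∈ L' := by
    rw [hL', restrictList]; exact List.mem_filter.mpr ⟨haLmem, by simpa using haC'⟩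
  have hbL' : b ∈ L' := by
    rw [hL', restrictList]; exact List.mem_filter.mpr ⟨hbLmem, by simpa using hbC'⟩
  have hcL' : c ∈ L' := by
    rw [hL', restrictList]; exact List.mem_filter.mpr ⟨hcLmem, by simpa using hcC'⟩
  have haL'p : Prefers L' a c :=
    prefers_filter _ L a c (by simpa using haC') (by simpa using hcC') haL
  have hbL'p : Prefers L' c b :=
    prefers_filter _ L c b (by simpa using hcC') (by simpa using hbC') hbL
  -- c is last in v'
  have hlast' : v'.getLast? = some c :=
    getLast?_filter _ v c hlast (by simpa using hcC')
  have hnd' : v'.Nodup := List.Nodup.filter _ hv.1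
  have hav' : a ∈ v' := by
    rw [hv', restrictList]
    exact List.mem_filter.mpr ⟨(hv.2 a).mpr haC, by simpa using haC'⟩
  have hac : a ≠ c := fun h => by subst h; exact lt_irrefl _ haL
  have hpref1 : Prefers v' a c := prefers_getLast v' c a hnd' hlast' hav' hac
  have hpref2 : Prefers v' c b := hsp a c b haL' hcL' hbL' (Or.inl ⟨haL'p, hbL'p⟩) hpref1
  -- but c is last, so b must be before c
  have hbc : b ≠ c := fun h => by subst h; exact lt_irrefl _ hbL
  have hbv' : b ∈ v' := by
    rw [hv', restrictList]
    exact List.mem_filter.mpr ⟨(hv.2 b).mpr hbC, by simpa using hbC'⟩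
  have hpref3 : Prefers v' b c := prefers_getLast v' c b hnd' hlast' hbv' hbc
  exact absurd hpref2 (not_lt.mpr (le_of_lt hpref3))
end

section
/- Let C be a finite candidate set with p ∈ C, let I be a finite index set of voters, let V : I → (subsets of C) assign to each voter an approval ballot, and let S ⊆ I. If there exists an assignment W : I → (subsets of C) with W(i) = V(i) for all i ∉ S such that p is an approval winner of the election with ballots W, then p is an approval winner of the election with ballots W' where W'(i) = V(i) for i ∉ S and W'(i) = {p} for i ∈ S. (That is, bribing each bribed voter to approve of p and only p is an optimal bribe in approval voting.) -/
variable {α : Type*} [DecidableEq α]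

/-- In approval voting, if the voters in `S` can be bribed (i.e., their
ballots arbitrarily changed) so that `p` becomes an approval winner, then bribing each
voter in `S` to approve of `p` and only `p` also makes `p` an approval winner. -/
theorem approval_bribe_to_only_p_optimal
    {I : Type*} [Fintype I] [DecidableEq I]
    (C : Finset α) (p : α) (hp : p ∈ C)
    (V : I → Finset α) (hV : ∀ i, V i ⊆ C) (S : Finset I)
    (h : ∃ W : I → Finset α, (∀ i, W i ⊆ C) ∧ (∀ i ∉ S, W i = V i) ∧
      ApprovalWinner C W p) :
    ApprovalWinner C (fun i => if i ∈ S then {p} else V i) p := by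
  obtain ⟨W, hWC, hWV, hpW, hwin⟩ := h
  refine ⟨hp, fun c hc => ?_⟩
  by_cases hcp : c = p
  · subst hcp; exact le_rfl
  have h1 : approvalScore (fun i => if i ∈ S then ({p} : Finset α) else V i) c
      ≤ approvalScore W c := by
    apply Finset.card_le_card
    intro i hi
    simp only [Finset.mem_filter, Finset.mem_univ, true_and] at hi ⊢
    by_cases hiS : i ∈ S
    · simp [hiS, Finset.mem_singleton] at hi; exact absurd hi hcp
    · simp [hiS] at hi; rw [hWV i hiS]; exact hi
  have h2 : approvalScore W p
      ≤ approvalScore (fun i => if i ∈ S then ({p} : Finset α) else V i) p := by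
    apply Finset.card_le_card
    intro i hi
    simp only [Finset.mem_filter, Finset.mem_univ, true_and] at hi ⊢
    by_cases hiS : i ∈ S
    · simp [hiS]
    · simp [hiS]; rw [← hWV i hiS]; exact hi
  exact le_trans h1 (le_trans (hwin c hc) h2)
end

section
/- Let α1 and α2 be integers with α1 > 2·α2 and α2 ≥ 1. Consider a weighted (α1, α2, 0) scoring election over three candidates a, p, b with societal axis a L p L b, in which every voter's linear-order vote is single-caved with respect to L, every voter has a positive integer weight, and the total weight W of all voters is positive. Then the score of the middle candidate p is strictly less than the maximum of the scores of a and b; in particular, p is not a winner. -/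
variable {α : Type*} [DecidableEq α]

lemma vote_facts_sc (a1 a2 : ℕ) (a p b : α) (hap : a ≠ p) (hpb : p ≠ b) (hab : a ≠ b)
    (l : List α) (hl : IsVoteOn {a, p, b} l) (hc : SingleCaved [a, p, b] l) :
    score3 a1 a2 l p ≤ a2 ∧ a1 ≤ score3 a1 a2 l a + score3 a1 a2 l b := by
  have ha : a ∈ l := (hl.2 a).2 (by simp)
  have hp : p ∈ l := (hl.2 p).2 (by simp)
  have hb : b ∈ l := (hl.2 b).2 (by simp)
  have htf : l.toFinset = ({a, p, b} : Finset α) := by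
    ext x; simp [hl.2 x]
  have hcard : ({a, p, b} : Finset α).card = 3 := by
    rw [Finset.card_insert_of_notMem (by simp [hap, hab]),
        Finset.card_insert_of_notMem (by simp [hpb]), Finset.card_singleton]
  have hlen : l.length = 3 := by
    rw [← List.toFinset_card_of_nodup hl.1, htf, hcard]
  have hia : l.idxOf a < 3 := hlen ▸ List.idxOf_lt_length_iff.2 ha
  have hip : l.idxOf p < 3 := hlen ▸ List.idxOf_lt_length_iff.2 hp
  have hib : l.idxOf b < 3 := hlen ▸ List.idxOf_lt_length_iff.2 hb
  have hab' : l.idxOf a ≠ l.idxOf b := fun h => hab ((List.idxOf_inj ha (y := b)).1 h)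
  have hap' : l.idxOf a ≠ l.idxOf p := fun h => hap ((List.idxOf_inj ha (y := p)).1 h)
  have hpb' : l.idxOf p ≠ l.idxOf b := fun h => hpb ((List.idxOf_inj hp (y := b)).1 h)
  have hip0 : l.idxOf p ≠ 0 := by
    intro h0
    have hpa : Prefers l p a := by
      unfold Prefers; omega
    have := hc a p b (by simp) (by simp) (by simp)
      (Or.inl ⟨by simp [Prefers, List.idxOf_cons, hap, hpb, hab, Ne.symm hap, Ne.symm hpb, Ne.symm hab],
               by simp [Prefers, List.idxOf_cons, hap, hpb, hab, Ne.symm hap, Ne.symm hpb, Ne.symm hab]⟩) hpa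
    unfold Prefers at this; omega
  constructor <;> (unfold score3; split_ifs <;> omega)

/-- In a weighted `(a1, a2, 0)` scoring election with `a1 > 2·a2`,
`a2 ≥ 1`, over three candidates with axis `a L p L b`, all votes single-caved w.r.t.
`L`, all weights positive, and positive total weight, the middle candidate `p` scores
strictly less than the better of `a` and `b`; in particular `p` is not a winner. -/
theorem singleCaved_middle_loses
    (a1 a2 : ℕ) (h1 : 2 * a2 < a1) (h2 : 1 ≤ a2)
    (a p b : α) (hap : a ≠ p) (hpb : p ≠ b) (hab : a ≠ b)
    {I : Type*} [Fintype I] (w : I → ℕ) (hw : ∀ i, 0 < w i)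
    (V : I → List α)
    (hV : ∀ i, IsVoteOn {a, p, b} (V i) ∧ SingleCaved [a, p, b] (V i))
    (hW : 0 < ∑ i, w i) :
    (∑ i, w i * score3 a1 a2 (V i) p) <
      max (∑ i, w i * score3 a1 a2 (V i) a) (∑ i, w i * score3 a1 a2 (V i) b) ∧
    ¬ (∀ c ∈ ({a, p, b} : Finset α),
        (∑ i, w i * score3 a1 a2 (V i) c) ≤ ∑ i, w i * score3 a1 a2 (V i) p) := by
  
  set A := ∑ i, w i * score3 a1 a2 (V i) a with hA
  set B := ∑ i, w i * score3 a1 a2 (V i) b with hB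
  set P := ∑ i, w i * score3 a1 a2 (V i) p with hP
  set W := ∑ i, w i with hWdef
  have facts := fun i => vote_facts_sc a1 a2 a p b hap hpb hab (V i) (hV i).1 (hV i).2
  have hPle : P ≤ W * a2 := by
    rw [hP, hWdef, Finset.sum_mul]
    exact Finset.sum_le_sum fun i _ => Nat.mul_le_mul_left _ (facts i).1
  have hABge : W * a1 ≤ A + B := by
    rw [hA, hB, hWdef, Finset.sum_mul, ← Finset.sum_add_distrib]
    refine Finset.sum_le_sum fun i _ => ?_
    rw [← Nat.mul_add]
    exact Nat.mul_le_mul_left _ (facts i).2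
  have key : 2 * P < A + B := by
    calc 2 * P ≤ 2 * (W * a2) := by omega
    _ = W * (2 * a2) := by ring
    _ < W * a1 := Nat.mul_lt_mul_of_le_of_lt (le_refl W) h1 hW
    _ ≤ A + B := hABge
  have hmA : A ≤ max A B := le_max_left _ _
  have hmB : B ≤ max A B := le_max_right _ _
  have hfirst : P < max A B := by omega
  refine ⟨hfirst, fun hcon => ?_⟩
  have h1' := hcon a (by simp)
  have h2' := hcon b (by simp)
  omega
end

section
/- Let α1 ≥ α2 ≥ 1 be integers, let n ≥ 1, and let k_1, ..., k_n be distinct positive integers with k_1 + ... + k_n = 2K for a positive integer K. Consider the weighted (α1, α2, 0) scoring election over candidates {p, a, b} whose voters are: one fixed voter with preference order a > b > p and weight (2α1 − α2)·α1·K; one fixed voter with preference order b > p > a and nonnegative weight (2α1 − α2)·(α1 − α2)·K; and n manipulators, where manipulator i has weight (α1² − α1·α2 + α2²)·k_i and may cast any linear order on {p, a, b}. Then there exists a choice of the manipulators' preference orders under which p is a winner (p's score is at least the score of a and at least the score of b) if and only if there exists a subset S ⊆ {1, ..., n} with Σ_{i∈S} k_i = K. -/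
variable {α : Type*} [DecidableEq α]

lemma score3_vals (a1 a2 : ℕ) (x y z : α) (hxy : x ≠ y) (hxz : x ≠ z) (hyz : y ≠ z) :
    score3 a1 a2 [x,y,z] x = a1 ∧ score3 a1 a2 [x,y,z] y = a2 ∧ score3 a1 a2 [x,y,z] z = 0 := by
  have h1 : List.idxOf x [x,y,z] = 0 := List.idxOf_cons_self
  have h2 : List.idxOf y [x,y,z] = 1 := by
    rw [List.idxOf_cons_ne _ hxy, List.idxOf_cons_self]
  have h3 : List.idxOf z [x,y,z] = 2 := by
    rw [List.idxOf_cons_ne _ hxz, List.idxOf_cons_ne _ hyz, List.idxOf_cons_self]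
  simp [score3, h1, h2, h3]

lemma vote_cases (p a b : α) (hpa : p ≠ a) (hpb : p ≠ b) (hab : a ≠ b)
    (v : List α) (hv : IsVoteOn {p, a, b} v) :
    v = [p,a,b] ∨ v = [p,b,a] ∨ v = [a,p,b] ∨ v = [a,b,p] ∨ v = [b,p,a] ∨ v = [b,a,p] := by
  obtain ⟨hnd, hmem⟩ := hv
  have hlen : v.length = 3 := by
    have h1 : v.toFinset = {p, a, b} := by
      ext c; simp [List.mem_toFinset, hmem]
    have h2 := List.toFinset_card_of_nodup hnd
    rw [h1] at h2
    rw [← h2, Finset.card_insert_of_notMem (by simp [hpa, hpb]),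
      Finset.card_insert_of_notMem (by simp [hab]), Finset.card_singleton]
  match v, hlen with
  | [x, y, z], _ =>
    have hx : x = p ∨ x = a ∨ x = b := by have := (hmem x).1 (by simp); simpa using this
    have hy : y = p ∨ y = a ∨ y = b := by have := (hmem y).1 (by simp); simpa using this
    have hz : z = p ∨ z = a ∨ z = b := by have := (hmem z).1 (by simp); simpa using this
    have hd : x ≠ y ∧ x ≠ z ∧ y ≠ z := by
      simpa [List.nodup_cons, and_assoc] using hnd
    rcases hx with rfl|rfl|rfl <;> rcases hy with rfl|rfl|rfl <;> rcases hz with rfl|rfl|rfl <;>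
      simp_all

/-- One-maverick manipulation of `(a1, a2, 0)` scoring elections encodes
PARTITION: with the two fixed voters `a > b > p` of weight `(2a1 - a2)·a1·K` and
`b > p > a` of weight `(2a1 - a2)·(a1 - a2)·K`, and manipulators of weights
`(a1² - a1·a2 + a2²)·k_i`, the manipulators can make `p` a winner iff some subset of
the `k_i` sums to `K`. -/
theorem oneMaverick_scoring_manipulation_iff_partition
    (a1 a2 : ℕ) (h12 : a2 ≤ a1) (h2 : 1 ≤ a2)
    (p a b : α) (hpa : p ≠ a) (hpb : p ≠ b) (hab : a ≠ b)
    (n : ℕ) (hn : 1 ≤ n) (kk : Fin n → ℕ) (hinj : Function.Injective kk)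
    (hpos : ∀ i, 0 < kk i) (K : ℕ) (hK : 0 < K) (hsum : ∑ i, kk i = 2 * K) :
    (∃ σ : Fin n → List α, (∀ i, IsVoteOn {p, a, b} (σ i)) ∧
      (let sc : α → ℕ := fun c =>
        (2 * a1 - a2) * a1 * K * score3 a1 a2 [a, b, p] c
          + (2 * a1 - a2) * (a1 - a2) * K * score3 a1 a2 [b, p, a] c
          + ∑ i, (a1 * a1 - a1 * a2 + a2 * a2) * kk i * score3 a1 a2 (σ i) c
       sc a ≤ sc p ∧ sc b ≤ sc p))
    ↔ ∃ S : Finset (Fin n), ∑ i ∈ S, kk i = K := by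
  -- arithmetic setup
  obtain ⟨A, hA⟩ : ∃ A, a1 = a2 + A := ⟨a1 - a2, by omega⟩
  have hsub1 : a1 - a2 = A := by omega
  have hsub2 : 2 * a1 - a2 = a2 + 2 * A := by omega
  have hMe : a1 * a1 - a1 * a2 + a2 * a2 = a1 * A + a2 * a2 := by
    have h1 : a1 * a1 = a1 * a2 + a1 * A := by rw [hA]; ring
    rw [h1, Nat.add_sub_cancel_left]
  set M : ℕ := a1 * A + a2 * a2 with hMdef
  have hMpos : 0 < M := by
    calc 0 < a2 * a2 := Nat.mul_pos h2 h2
    _ ≤ M := Nat.le_add_left _ _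
  -- fixed-vote scores
  have sabp := score3_vals a1 a2 a b p hab hpa.symm hpb.symm
  have sbpa := score3_vals a1 a2 b p a hpb.symm hab.symm hpa
  have key1 : (a2 + 2 * A) * a1 * K * a1
      = (a2 + 2 * A) * A * K * a2 + M * ((a2 + 2 * A) * K) := by
    rw [hMdef, hA]; ring
  have key2 : (a2 + 2 * A) * a1 * K * a2 + (a2 + 2 * A) * A * K * a1
      = (a2 + 2 * A) * A * K * a2 + M * ((a2 + 2 * A) * K) := by
    rw [hMdef, hA]; ring
  have e5 : (a2 + 2 * A) * K + a2 * K = 2 * (a1 * K) := by rw [hA]; ring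
  constructor
  · rintro ⟨σ, hvote, hsc⟩
    obtain ⟨ha, hb⟩ := hsc
    simp only at ha hb
    simp only [sabp.1, sabp.2.1, sabp.2.2, sbpa.1, sbpa.2.1, sbpa.2.2] at ha hb
    simp only [mul_zero, zero_add, add_zero] at ha hb
    have hcase : ∀ i,
        (score3 a1 a2 (σ i) p = a1 ∧ score3 a1 a2 (σ i) a = a2 ∧ score3 a1 a2 (σ i) b = 0) ∨
        (score3 a1 a2 (σ i) p = a1 ∧ score3 a1 a2 (σ i) a = 0 ∧ score3 a1 a2 (σ i) b = a2) ∨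
        (score3 a1 a2 (σ i) p = a2 ∧ score3 a1 a2 (σ i) a = a1 ∧ score3 a1 a2 (σ i) b = 0) ∨
        (score3 a1 a2 (σ i) p = 0 ∧ score3 a1 a2 (σ i) a = a1 ∧ score3 a1 a2 (σ i) b = a2) ∨
        (score3 a1 a2 (σ i) p = a2 ∧ score3 a1 a2 (σ i) a = 0 ∧ score3 a1 a2 (σ i) b = a1) ∨
        (score3 a1 a2 (σ i) p = 0 ∧ score3 a1 a2 (σ i) a = a2 ∧ score3 a1 a2 (σ i) b = a1) := by
      intro i
      rcases vote_cases p a b hpa hpb hab (σ i) (hvote i) with h|h|h|h|h|h <;> rw [h]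
      · obtain ⟨e1, e2, e3⟩ := score3_vals a1 a2 p a b hpa hpb hab
        exact Or.inl ⟨e1, e2, e3⟩
      · obtain ⟨e1, e2, e3⟩ := score3_vals a1 a2 p b a hpb hpa hab.symm
        exact Or.inr (Or.inl ⟨e1, e3, e2⟩)
      · obtain ⟨e1, e2, e3⟩ := score3_vals a1 a2 a p b hpa.symm hab hpb
        exact Or.inr (Or.inr (Or.inl ⟨e2, e1, e3⟩))
      · obtain ⟨e1, e2, e3⟩ := sabp
        exact Or.inr (Or.inr (Or.inr (Or.inl ⟨e3, e1, e2⟩)))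
      · obtain ⟨e1, e2, e3⟩ := sbpa
        exact Or.inr (Or.inr (Or.inr (Or.inr (Or.inl ⟨e2, e3, e1⟩))))
      · obtain ⟨e1, e2, e3⟩ := score3_vals a1 a2 b a p hab.symm hpb.symm hpa.symm
        exact Or.inr (Or.inr (Or.inr (Or.inr (Or.inr ⟨e3, e2, e1⟩))))
    -- rewrite the manipulator sums
    have hsump : ∀ c : α, (∑ i, M * kk i * score3 a1 a2 (σ i) c)
        = M * ∑ i, kk i * score3 a1 a2 (σ i) c := by
      intro c; rw [Finset.mul_sum]; exact Finset.sum_congr rfl fun i _ => by rw [mul_assoc]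
    rw [hsub1, hsub2, hMe] at ha hb
    rw [hsump a, hsump p] at ha
    rw [hsump b, hsump p] at hb
    set Sp := ∑ i, kk i * score3 a1 a2 (σ i) p with hSpdef
    set Sa := ∑ i, kk i * score3 a1 a2 (σ i) a with hSadef
    set Sb := ∑ i, kk i * score3 a1 a2 (σ i) b with hSbdef
    have e1 : (a2 + 2 * A) * K + Sa ≤ Sp := by
      have h : M * ((a2 + 2 * A) * K + Sa) ≤ M * Sp := by rw [mul_add]; linarith [key1, ha]
      exact Nat.le_of_mul_le_mul_left h hMpos
    have e2 : (a2 + 2 * A) * K + Sb ≤ Sp := by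
      have h : M * ((a2 + 2 * A) * K + Sb) ≤ M * Sp := by rw [mul_add]; linarith [key2, hb]
      exact Nat.le_of_mul_le_mul_left h hMpos
    have e3 : Sp + Sa + Sb = 2 * (a1 * K) + 2 * (a2 * K) := by
      have h1 : Sp + Sa + Sb = ∑ i, kk i * (a1 + a2) := by
        rw [hSpdef, hSadef, hSbdef, ← Finset.sum_add_distrib, ← Finset.sum_add_distrib]
        refine Finset.sum_congr rfl fun i _ => ?_
        rcases hcase i with ⟨f1,f2,f3⟩|⟨f1,f2,f3⟩|⟨f1,f2,f3⟩|⟨f1,f2,f3⟩|⟨f1,f2,f3⟩|⟨f1,f2,f3⟩ <;>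
          rw [f1, f2, f3] <;> ring
      rw [h1, ← Finset.sum_mul, hsum]; ring
    have xle : ∀ i, score3 a1 a2 (σ i) p ≤ a1 := by
      intro i; rcases hcase i with h|h|h|h|h|h <;> omega
    have e4 : Sp ≤ 2 * (a1 * K) := by
      calc Sp ≤ ∑ i, kk i * a1 :=
            Finset.sum_le_sum fun i _ => Nat.mul_le_mul_left _ (xle i)
        _ = 2 * (a1 * K) := by rw [← Finset.sum_mul, hsum]; ring
    have hSp : Sp = 2 * (a1 * K) := le_antisymm e4 (by linarith)
    have hSa : Sa = a2 * K := by linarith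
    have hxeq : ∀ i, score3 a1 a2 (σ i) p = a1 := by
      have hle : ∀ i ∈ Finset.univ, kk i * score3 a1 a2 (σ i) p ≤ kk i * a1 :=
        fun i _ => Nat.mul_le_mul_left _ (xle i)
      have hsummax : (∑ i, kk i * a1) = 2 * (a1 * K) := by
        rw [← Finset.sum_mul, hsum]; ring
      have heq : ∑ i, kk i * score3 a1 a2 (σ i) p = ∑ i, kk i * a1 := by
        rw [hsummax]; exact hSp
      have := (Finset.sum_eq_sum_iff_of_le hle).1 heq
      exact fun i => Nat.eq_of_mul_eq_mul_left (hpos i) (this i (Finset.mem_univ i))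
    have hy01 : ∀ i, score3 a1 a2 (σ i) a = a2 ∨ score3 a1 a2 (σ i) a = 0 := by
      intro i; have hc := hcase i; have hx := hxeq i; omega
    refine ⟨Finset.univ.filter (fun i => score3 a1 a2 (σ i) a ≠ 0), ?_⟩
    have hkey : a2 * ∑ i ∈ Finset.univ.filter (fun i => score3 a1 a2 (σ i) a ≠ 0), kk i
        = a2 * K := by
      calc a2 * ∑ i ∈ Finset.univ.filter (fun i => score3 a1 a2 (σ i) a ≠ 0), kk i
          = ∑ i ∈ Finset.univ.filter (fun i => score3 a1 a2 (σ i) a ≠ 0),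
              kk i * score3 a1 a2 (σ i) a := by
            rw [Finset.mul_sum]
            refine Finset.sum_congr rfl fun i hi => ?_
            have h0 := (Finset.mem_filter.1 hi).2
            rcases hy01 i with h|h
            · rw [h]; ring
            · exact absurd h h0
        _ = Sa := by
            rw [hSadef]
            refine Finset.sum_filter_of_ne fun i _ hne => ?_
            intro h0; rw [h0, mul_zero] at hne; exact hne rfl
        _ = a2 * K := hSa
    exact Nat.eq_of_mul_eq_mul_left h2 hkey
  · rintro ⟨S, hS⟩
    refine ⟨fun i => if i ∈ S then [p,a,b] else [p,b,a], fun i => ?_, ?_⟩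
    · by_cases h : i ∈ S <;> simp only [h, if_true, if_false]
      · exact ⟨by simp [hpa, hpb, hab], by intro c; simp <;> tauto⟩
      · exact ⟨by simp [hpa, hpb, hab.symm], by intro c; simp <;> tauto⟩
    obtain ⟨f1, f2, f3⟩ := score3_vals a1 a2 p a b hpa hpb hab
    obtain ⟨g1, g2, g3⟩ := score3_vals a1 a2 p b a hpb hpa hab.symm
    have hsp : (∑ i, (a1 * a1 - a1 * a2 + a2 * a2) * kk i *
        score3 a1 a2 (if i ∈ S then [p,a,b] else [p,b,a]) p) = M * (2 * (a1 * K)) := by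
      have : ∀ i : Fin n, (a1 * a1 - a1 * a2 + a2 * a2) * kk i *
          score3 a1 a2 (if i ∈ S then [p,a,b] else [p,b,a]) p = M * a1 * kk i := by
        intro i; split_ifs
        · rw [f1, hMe]; ring
        · rw [g1, hMe]; ring
      rw [Finset.sum_congr rfl fun i _ => this i, ← Finset.mul_sum, hsum]; ring
    have hsa : (∑ i, (a1 * a1 - a1 * a2 + a2 * a2) * kk i *
        score3 a1 a2 (if i ∈ S then [p,a,b] else [p,b,a]) a) = M * (a2 * K) := by
      have h1 : ∀ i : Fin n, (a1 * a1 - a1 * a2 + a2 * a2) * kk i *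
          score3 a1 a2 (if i ∈ S then [p,a,b] else [p,b,a]) a
          = if i ∈ S then M * a2 * kk i else 0 := by
        intro i; split_ifs
        · rw [f2, hMe]; ring
        · rw [g3, hMe]; ring
      rw [Finset.sum_congr rfl fun i _ => h1 i, Finset.sum_ite_mem, Finset.univ_inter,
        ← Finset.mul_sum, hS]; ring
    have hScomp : ∑ i ∈ Sᶜ, kk i = K := by
      have := Finset.sum_add_sum_compl S kk
      rw [hS, hsum] at this; omega
    have hsb : (∑ i, (a1 * a1 - a1 * a2 + a2 * a2) * kk i *
        score3 a1 a2 (if i ∈ S then [p,a,b] else [p,b,a]) b) = M * (a2 * K) := by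
      have h1 : ∀ i : Fin n, (a1 * a1 - a1 * a2 + a2 * a2) * kk i *
          score3 a1 a2 (if i ∈ S then [p,a,b] else [p,b,a]) b
          = if i ∈ Sᶜ then M * a2 * kk i else 0 := by
        intro i
        rcases Finset.decidableMem i S with h|h <;> simp only [Finset.mem_compl, h,
          if_true, if_false, if_pos, if_neg, not_true, not_false_iff]
        · rw [g2, hMe]; ring
        · rw [f3, hMe]; ring
      rw [Finset.sum_congr rfl fun i _ => h1 i, Finset.sum_ite_mem, Finset.univ_inter,
        ← Finset.mul_sum, hScomp]; ring
    refine ⟨?_, ?_⟩ <;> simp only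
    · rw [sabp.1, sbpa.2.2, sabp.2.2, sbpa.2.1, hsp, hsa, hsub1, hsub2, hMdef, hA]
      exact le_of_eq (by ring)
    · rw [sabp.2.1, sbpa.1, sabp.2.2, sbpa.2.1, hsp, hsb, hsub1, hsub2, hMdef, hA]
      exact le_of_eq (by ring)
end
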